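/- arXiv:2401.08113 — 6 statements merged into one kernel-verified Lean document; each statement's English description precedes it below -/
import Mathlib

section
/- Let d ≥ 1 be an integer, let z ∈ ℂ^d with z ≠ 0, and fix 1 ≤ j ≤ d. Then the function t ↦ (2πt)^{−d} (conj(z_j)/t) exp(−‖z‖²/(2t)) is integrable on (0, ∞), and ∫₀^∞ (2πt)^{−d} (conj(z_j)/t) exp(−‖z‖²/(2t)) dt = ((d−1)!/π^d) · conj(z_j)/‖z‖^{2d}. In particular, the regularized propagator coefficients K^j_{ε,L}(z) converge to the Bochner–Martinelli kernel coefficient ((d−1)!/π^d) · conj(z_j)/‖z‖^{2d} as ε → 0⁺ and L → +∞. -/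
open MeasureTheory Filter

open Set Real in
lemma bm_real_aux (d : ℕ) (hd : 1 ≤ d) {a : ℝ} (ha : 0 < a) :
    IntegrableOn (fun t : ℝ => ((2 * Real.pi * t) ^ d)⁻¹ * t⁻¹ * Real.exp (-a / (2 * t)))
      (Set.Ioi 0) volume ∧
    (∫ t in Set.Ioi (0 : ℝ), ((2 * Real.pi * t) ^ d)⁻¹ * t⁻¹ * Real.exp (-a / (2 * t)))
      = (d - 1).factorial / (Real.pi ^ d * a ^ d) := by
  obtain ⟨m, rfl⟩ : ∃ m, d = m + 1 := ⟨d - 1, (Nat.succ_pred_eq_of_pos hd).symm⟩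
  set g : ℝ → ℝ := fun t => ((2 * Real.pi * t) ^ (m + 1))⁻¹ * t⁻¹ * Real.exp (-a / (2 * t))
    with hg
  have hb : (0 : ℝ) < a / 2 := by linarith
  have hs : (-1 : ℝ) < (m : ℝ) := by
    have : (0:ℝ) ≤ m := Nat.cast_nonneg m
    linarith
  -- the transformed integrand
  set F : ℝ → ℝ := fun x => ((2 * Real.pi) ^ (m + 1))⁻¹ *
      (x ^ (m : ℝ) * Real.exp (-(a / 2) * x ^ (1 : ℝ))) with hF
  have key : ∀ x ∈ Set.Ioi (0 : ℝ),
      (|(-1 : ℝ)| * x ^ ((-1 : ℝ) - 1)) • g (x ^ (-1 : ℝ)) = F x := by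
    intro x hx
    have hx0 : (0 : ℝ) < x := hx
    have h1 : x ^ (-1 : ℝ) = x⁻¹ := Real.rpow_neg_one x
    have h2 : x ^ ((-1 : ℝ) - 1) = (x ^ 2)⁻¹ := by
      rw [show ((-1 : ℝ) - 1) = -((2 : ℕ) : ℝ) by norm_num, Real.rpow_neg hx0.le,
        Real.rpow_natCast]
    have h3 : x ^ (m : ℝ) = x ^ m := Real.rpow_natCast x m
    have hE : -a / (2 * x⁻¹) = -(a / 2) * x ^ (1 : ℝ) := by
      rw [Real.rpow_one]; field_simp
    simp only [hg, hF, h1, h2, h3, hE, abs_neg, abs_one, one_mul, smul_eq_mul]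
    have hπ : Real.pi ≠ 0 := Real.pi_ne_zero
    have hx' : x ≠ 0 := hx0.ne'
    field_simp
    have hxm : x * x ^ m * x⁻¹ * x⁻¹ ^ m = 1 := by rw [inv_pow]; field_simp
    linear_combination (-(π * π ^ m * 2 ^ m * 2)) * hxm
  have hFi : IntegrableOn F (Set.Ioi 0) volume := by
    exact (integrableOn_rpow_mul_exp_neg_mul_rpow hs one_pos hb).const_mul _
  have hInt : IntegrableOn g (Set.Ioi 0) volume := by
    rw [← integrableOn_Ioi_comp_rpow_iff g (p := (-1 : ℝ)) (by norm_num)]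
    exact (integrableOn_congr_fun key measurableSet_Ioi).mpr hFi
  refine ⟨hInt, ?_⟩
  have h4 : (∫ t in Set.Ioi (0 : ℝ), g t)
      = ∫ x in Set.Ioi (0 : ℝ), F x := by
    rw [← integral_comp_rpow_Ioi g (p := (-1 : ℝ)) (by norm_num)]
    exact setIntegral_congr_fun measurableSet_Ioi key
  rw [h4, hF]
  rw [MeasureTheory.integral_const_mul, integral_rpow_mul_exp_neg_mul_rpow one_pos hs hb]
  have : ((m : ℝ) + 1) / 1 = ((m + 1 : ℕ) : ℝ) := by push_cast; ring
  rw [this, show ((m + 1 : ℕ) : ℝ) = ((m:ℝ) + 1) by push_cast; ring, Real.Gamma_nat_eq_factorial]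
  have h5 : (a / 2) ^ (-((m : ℝ) + 1) / 1) = ((a / 2) ^ (m + 1))⁻¹ := by
    rw [show (-((m : ℝ) + 1) / 1) = -(((m + 1 : ℕ) : ℝ)) by push_cast; ring,
      Real.rpow_neg hb.le, Real.rpow_natCast]
  rw [h5]
  have hπ : Real.pi ≠ 0 := Real.pi_ne_zero
  simp only [Nat.add_sub_cancel]
  field_simp
  have h2m : ((1:ℝ) / 2) ^ m * 2 ^ m = 1 := by rw [← mul_pow]; norm_num
  linear_combination (-(π * π ^ m * a * a ^ m)) * h2m


/-- The integrand `t ↦ (2πt)^{-d} (conj z_j / t) exp(-‖z‖²/(2t))` of the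
Schwinger representation of the Bochner–Martinelli kernel coefficient. -/
noncomputable def bmIntegrand (d : ℕ) (j : Fin d) (z : Fin d → ℂ) (t : ℝ) : ℂ :=
  ((((2 * Real.pi * t) ^ d)⁻¹ : ℝ) : ℂ) * ((starRingEnd ℂ) (z j) / (t : ℂ)) *
    Complex.exp (-((∑ i, Complex.normSq (z i) : ℝ) : ℂ) / (2 * (t : ℂ)))

/-- The Bochner–Martinelli kernel coefficient `((d-1)!/π^d) ⬝ conj z_j / ‖z‖^{2d}`. -/
noncomputable def bmKernel (d : ℕ) (j : Fin d) (z : Fin d → ℂ) : ℂ :=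
  ((((d - 1).factorial : ℝ) / Real.pi ^ d : ℝ) : ℂ) * (starRingEnd ℂ) (z j) /
    ((∑ i, Complex.normSq (z i) : ℝ) : ℂ) ^ d

/-- The coefficient function of the regularized Bochner–Martinelli propagator,
`K^j_{ε,L}(z) = ∫_ε^L (2πt)^{-d} (conj z_j / t) exp(-‖z‖²/(2t)) dt`. -/
noncomputable def bmReg (d : ℕ) (j : Fin d) (ε L : ℝ) (z : Fin d → ℂ) : ℂ :=
  ∫ t in ε..L, bmIntegrand d j z t

/-- For `z ≠ 0`, the integrand is integrable on `(0,∞)`, its integral is the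
Bochner–Martinelli kernel coefficient, and the regularized propagator coefficients
`K^j_{ε,L}(z)` converge to it as `ε → 0⁺` and `L → +∞`. -/

theorem bm_kernel_integral (d : ℕ) (hd : 1 ≤ d) (z : Fin d → ℂ) (hz : z ≠ 0) (j : Fin d) :
    IntegrableOn (bmIntegrand d j z) (Set.Ioi 0) volume ∧
    (∫ t in Set.Ioi (0 : ℝ), bmIntegrand d j z t) = bmKernel d j z ∧
    Tendsto (fun p : ℝ × ℝ => bmReg d j p.1 p.2 z)
      ((nhdsWithin 0 (Set.Ioi 0)) ×ˢ atTop) (nhds (bmKernel d j z)) := by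
  set a : ℝ := ∑ i, Complex.normSq (z i) with ha_def
  have ha : 0 < a := by
    obtain ⟨i, hi⟩ := Function.ne_iff.mp hz
    exact Finset.sum_pos' (fun i _ => Complex.normSq_nonneg _)
      ⟨i, Finset.mem_univ i, Complex.normSq_pos.mpr hi⟩
  obtain ⟨hgi, hgval⟩ := bm_real_aux d hd ha
  set g : ℝ → ℝ := fun t => ((2 * Real.pi * t) ^ d)⁻¹ * t⁻¹ * Real.exp (-a / (2 * t)) with hg
  have hpt : ∀ t : ℝ, bmIntegrand d j z t = (starRingEnd ℂ) (z j) * ((g t : ℝ) : ℂ) := by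
    intro t
    simp only [bmIntegrand, hg, ← ha_def]
    rw [show -((a : ℝ) : ℂ) / (2 * (t : ℂ)) = (((-a / (2 * t) : ℝ)) : ℂ) by push_cast; ring,
      ← Complex.ofReal_exp]
    push_cast
    ring
  have hInt : IntegrableOn (bmIntegrand d j z) (Set.Ioi 0) volume := by
    refine (IntegrableOn.congr_fun ?_ (fun t _ => (hpt t).symm) measurableSet_Ioi)
    exact ((hgi.ofReal (𝕜 := ℂ)).const_mul _)
  have hval : (∫ t in Set.Ioi (0 : ℝ), bmIntegrand d j z t) = bmKernel d j z := by
    simp_rw [hpt]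
    rw [MeasureTheory.integral_const_mul]
    have hor : (∫ t in Set.Ioi (0:ℝ), ((g t : ℝ) : ℂ)) = ((∫ t in Set.Ioi (0:ℝ), g t : ℝ) : ℂ) :=
      integral_ofReal
    rw [hor, hgval, bmKernel, ← ha_def]
    have hπ : (Real.pi : ℝ) ≠ 0 := Real.pi_ne_zero
    push_cast
    field_simp
  refine ⟨hInt, hval, ?_⟩
  -- convergence via AECover
  set l : Filter (ℝ × ℝ) := (nhdsWithin 0 (Set.Ioi 0)) ×ˢ atTop with hl
  have hcover : AECover (volume.restrict (Set.Ioi (0 : ℝ))) l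
      (fun p : ℝ × ℝ => Set.Ioc p.1 p.2) := by
    constructor
    · refine (ae_restrict_mem measurableSet_Ioi).mono fun x hx => ?_
      have h1 : ∀ᶠ ε in nhdsWithin (0 : ℝ) (Set.Ioi 0), ε < x :=
        eventually_nhdsWithin_of_eventually_nhds (Filter.Tendsto.eventually_lt_const hx tendsto_id)
      have h2 : ∀ᶠ L in (atTop : Filter ℝ), x ≤ L := eventually_ge_atTop x
      filter_upwards [h1.prod_inl atTop, h2.prod_inr (nhdsWithin (0:ℝ) (Set.Ioi 0))] with p hp1 hp2
      exact ⟨hp1, hp2⟩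
    · exact fun p => measurableSet_Ioc
  have htend := hcover.integral_tendsto_of_countably_generated
    (f := bmIntegrand d j z) hInt
  rw [← hval]
  refine htend.congr' ?_
  have h1 : ∀ᶠ ε in nhdsWithin (0 : ℝ) (Set.Ioi 0), ε ∈ Set.Ioc (0:ℝ) 1 :=
    Ioc_mem_nhdsGT_of_mem ⟨le_rfl, one_pos⟩
  have h2 : ∀ᶠ L in (atTop : Filter ℝ), (1:ℝ) ≤ L := eventually_ge_atTop 1
  filter_upwards [h1.prod_inl atTop, h2.prod_inr (nhdsWithin (0:ℝ) (Set.Ioi 0))] with p hp1 hp2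
  have hle : p.1 ≤ p.2 := hp1.2.trans hp2
  have hsub : Set.Ioc p.1 p.2 ⊆ Set.Ioi 0 := fun x hx => lt_trans hp1.1 hx.1
  rw [Measure.restrict_restrict measurableSet_Ioc, Set.inter_eq_left.mpr hsub]
  rw [bmReg, intervalIntegral.integral_of_le hle]
end

section
/- (Weighted matrix-tree theorem.) Let Γ be a connected finite directed graph without self-loops with vertex set {1,…,N}, and let t = (t_e)_{e∈Γ₁} be positive weights. Then det M_Γ(t) = (Σ_{T ∈ Tree(Γ)} Π_{e ∉ T} t_e) / (Π_{e ∈ Γ₁} t_e). -/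
open Finset

/-- Reachability between vertices generated by (the endpoints of) the edges in `S`:
the equivalence relation generated by the pairs `(h e, t e)`, `e ∈ S`. -/
def Reach {V E : Type*} (hm tm : E → V) (S : Set E) : V → V → Prop :=
  Relation.EqvGen fun a b => ∃ e ∈ S, hm e = a ∧ tm e = b

/-- Incidence matrix entry: `1` if `i` is the head of `e`, `-1` if it is the tail,
`0` otherwise. -/
def inc {V E : Type*} [DecidableEq V] (hm tm : E → V) (e : E) (i : V) : ℝ :=
  if hm e = i then 1 else if tm e = i then -1 else 0

/-- Reduced weighted Laplacian `M_Γ(t)_{ij} = ∑_e ρ^e_i ρ^e_j / t_e`,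
indexed by the first `n` of the `n + 1` vertices. -/
noncomputable def lap {n : ℕ} {E : Type*} [Fintype E] (hm tm : E → Fin (n + 1))
    (w : E → ℝ) : Matrix (Fin n) (Fin n) ℝ :=
  Matrix.of fun i j => ∑ e, inc hm tm e i.castSucc * inc hm tm e j.castSucc / w e

/-- `T` is a spanning tree: it has `N - 1` edges and connects all vertices. -/
def IsSpanningTree {n : ℕ} {E : Type*} [Fintype E] (hm tm : E → Fin (n + 1))
    (T : Finset E) : Prop :=
  T.card = n ∧ ∀ a b : Fin (n + 1), Reach hm tm (↑T) a b


noncomputable def sel {E : Type*} {m : ℕ} (s : Finset E) (h : s.card = m) : Fin m → E :=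
  fun i => ((s.equivFinOfCardEq h).symm i : E)

lemma sel_mem {E : Type*} {m : ℕ} (s : Finset E) (h : s.card = m) (i : Fin m) : sel s h i ∈ s :=
  Subtype.coe_prop _

lemma sel_inj {E : Type*} {m : ℕ} (s : Finset E) (h : s.card = m) :
    Function.Injective (sel s h) := fun a b hab => by
  have := Subtype.coe_injective hab
  simpa using (s.equivFinOfCardEq h).symm.injective this

lemma sel_surj {E : Type*} {m : ℕ} (s : Finset E) (h : s.card = m) {e : E} (he : e ∈ s) :
    ∃ i, sel s h i = e := ⟨s.equivFinOfCardEq h ⟨e, he⟩, by simp [sel]⟩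

private lemma cb_fiber {m : ℕ} {E : Type*} [Fintype E] [DecidableEq E]
    (B : Matrix (Fin m) E ℝ) (C : Matrix E (Fin m) ℝ) (s : Finset E) (h : s.card = m) :
    ∑ r ∈ (Finset.univ.filter fun r : Fin m → E => Function.Injective r).filter
        (fun r => Finset.image r Finset.univ = s),
      (∏ i, B i (r i)) * (C.submatrix r id).det
    = (B.submatrix id (sel s h)).det * (C.submatrix (sel s h) id).det := by
  set φ := sel s h with hφdef
  have hmem : ∀ i, φ i ∈ s := sel_mem s h
  have hinj : Function.Injective φ := sel_inj s h
  have hφ : ∀ e ∈ s, ∃ i, φ i = e := fun e he => sel_surj s h he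
  have hfib : (Finset.univ.filter fun r : Fin m → E => Function.Injective r).filter
        (fun r => Finset.image r Finset.univ = s)
      = Finset.image (fun σ : Equiv.Perm (Fin m) => φ ∘ σ) Finset.univ := by
    ext r
    simp only [Finset.mem_filter, Finset.mem_univ, true_and, Finset.mem_image]
    constructor
    · rintro ⟨hrinj, hrimg⟩
      have hrs : ∀ k, r k ∈ s := fun k => by
        rw [← hrimg]; exact Finset.mem_image_of_mem r (Finset.mem_univ k)
      set f : Fin m → Fin m := fun k => (s.equivFinOfCardEq h) ⟨r k, hrs k⟩ with hf
      have hfinj : Function.Injective f := fun a b hab =>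
        hrinj (congrArg Subtype.val ((s.equivFinOfCardEq h).injective hab))
      refine ⟨Equiv.ofBijective f (Finite.injective_iff_bijective.mp hfinj), ?_⟩
      funext k
      simp only [Function.comp_apply, Equiv.ofBijective_apply, hf, hφdef, sel,
        Equiv.symm_apply_apply]
    · rintro ⟨σ, rfl⟩
      refine ⟨hinj.comp σ.injective, ?_⟩
      ext e
      simp only [Finset.mem_image, Finset.mem_univ, true_and, Function.comp_apply]
      exact ⟨fun ⟨k, hk⟩ => hk ▸ hmem _, fun he => by
        obtain ⟨i, hi⟩ := hφ e he; exact ⟨σ.symm i, by simp [hi]⟩⟩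
  have hinjOn : ∀ σ ∈ (Finset.univ : Finset (Equiv.Perm (Fin m))), ∀ τ ∈ (Finset.univ : Finset (Equiv.Perm (Fin m))),
      φ ∘ ⇑σ = φ ∘ ⇑τ → σ = τ := by
    intro σ _ τ _ hστ
    exact Equiv.coe_fn_injective (funext fun k => hinj (congrFun hστ k))
  rw [hfib, Finset.sum_image hinjOn]
  have hperm : ∀ σ : Equiv.Perm (Fin m),
      (C.submatrix (φ ∘ σ) id).det = (Equiv.Perm.sign σ : ℝ) * (C.submatrix φ id).det := by
    intro σ
    have h1 : C.submatrix (φ ∘ σ) id = (C.submatrix φ id).submatrix σ id := by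
      ext i j; rfl
    rw [h1, Matrix.det_permute]
  have hdetB : (B.submatrix id φ).det
      = ∑ σ : Equiv.Perm (Fin m), (Equiv.Perm.sign σ : ℝ) * ∏ i, B i (φ (σ i)) := by
    rw [← Matrix.det_transpose, Matrix.det_apply']
    rfl
  calc ∑ σ : Equiv.Perm (Fin m), (∏ i, B i ((φ ∘ σ) i)) * (C.submatrix (φ ∘ σ) id).det
      = ∑ σ : Equiv.Perm (Fin m), ((Equiv.Perm.sign σ : ℝ) * ∏ i, B i (φ (σ i)))
          * (C.submatrix φ id).det := by
        refine Finset.sum_congr rfl fun σ _ => ?_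
        rw [hperm σ]
        simp only [Function.comp_apply]
        ring
    _ = _ := by rw [← Finset.sum_mul, ← hdetB]

private lemma cauchy_binet {m : ℕ} {E : Type*} [Fintype E] [DecidableEq E]
    (B : Matrix (Fin m) E ℝ) (C : Matrix E (Fin m) ℝ) :
    (B * C).det = ∑ s : Finset E,
      if h : s.card = m then
        (B.submatrix id (sel s h)).det * (C.submatrix (sel s h) id).det
      else 0 := by
  have hA : (B * C).det = ∑ r : Fin m → E, (∏ i, B i (r i)) * (C.submatrix r id).det := by
    have h1 : (B * C) = Matrix.of fun i => ∑ e, B i e • C e := by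
      ext i j; simp [Matrix.mul_apply]
    rw [h1]
    refine ((Matrix.detRowAlternating (R := ℝ) (n := Fin m)).toMultilinearMap.map_sum
      (fun i e => B i e • C e)).trans ?_
    refine Finset.sum_congr rfl fun r _ => ?_
    have h3 := (Matrix.detRowAlternating (R := ℝ) (n := Fin m)).toMultilinearMap.map_smul_univ
      (fun i => B i (r i)) (fun i => C (r i))
    rw [show (C.submatrix r id).det = Matrix.detRowAlternating fun i => C (r i) from rfl]
    simpa [smul_eq_mul] using h3
  rw [hA]
  rw [← Finset.sum_filter_of_ne (p := fun r : Fin m → E => Function.Injective r)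
    (fun r _ hr => by
      by_contra hinj
      apply hr
      simp only [Function.Injective] at hinj
      push_neg at hinj
      obtain ⟨a, b, hab, hne⟩ := hinj
      have : (C.submatrix r id).det = 0 :=
        Matrix.det_zero_of_row_eq hne (by ext j; simp [hab])
      simp [this])]
  rw [← Finset.sum_fiberwise (Finset.univ.filter fun r : Fin m → E => Function.Injective r)
    (fun r => Finset.image r Finset.univ)
    (fun r => (∏ i, B i (r i)) * (C.submatrix r id).det)]
  refine Finset.sum_congr rfl fun s _ => ?_
  by_cases h : s.card = m
  · rw [dif_pos h]
    exact cb_fiber B C s h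
  · rw [dif_neg h]
    refine Finset.sum_eq_zero fun r hr => ?_
    simp only [Finset.mem_filter, Finset.mem_univ, true_and] at hr
    exact absurd (hr.2 ▸ (by rw [Finset.card_image_of_injective _ hr.1, Finset.card_univ,
      Fintype.card_fin] : (Finset.image r Finset.univ).card = m)) h

open Matrix

lemma inc_eq_sub {V E : Type*} [DecidableEq V] (hm tm : E → V) (e : E) (hne : hm e ≠ tm e)
    (u : V) : inc hm tm e u
      = (if hm e = u then (1:ℝ) else 0) - (if tm e = u then (1:ℝ) else 0) := by
  unfold inc
  by_cases h1 : hm e = u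
  · rw [if_pos h1, if_pos h1, if_neg (fun h2 => hne (h1.trans h2.symm))]; ring
  · rw [if_neg h1, if_neg h1]
    by_cases h2 : tm e = u <;> simp [h2]

lemma reach_comap {V W E E' : Type*} (hm tm : E → V) (hm' tm' : E' → W)
    (S : Set E) (S' : Set E') (ρ : V → W)
    (h : ∀ e ∈ S, Reach hm' tm' S' (ρ (hm e)) (ρ (tm e))) :
    ∀ {a b}, Reach hm tm S a b → Reach hm' tm' S' (ρ a) (ρ b) := by
  intro a b hab
  induction hab with
  | rel x y hxy =>
    obtain ⟨e, he, hx, hy⟩ := hxy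
    subst hx; subst hy
    exact h e he
  | refl x => exact Relation.EqvGen.refl _
  | symm x y _ ih => exact Relation.EqvGen.symm _ _ ih
  | trans x y z _ _ ih1 ih2 => exact Relation.EqvGen.trans _ _ _ ih1 ih2

lemma reach_isolated {V E : Type*} (hm tm : E → V) (S : Set E) (v : V)
    (hv : ∀ e ∈ S, hm e ≠ v ∧ tm e ≠ v) :
    ∀ {a b}, Reach hm tm S a b → (a = v ↔ b = v) := by
  intro a b hab
  induction hab with
  | rel x y hxy =>
    obtain ⟨e, he, hx, hy⟩ := hxy
    subst hx; subst hy
    exact ⟨fun h => absurd h (hv e he).1, fun h => absurd h (hv e he).2⟩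
  | refl x => exact Iff.rfl
  | symm x y _ ih => exact ih.symm
  | trans x y z _ _ ih1 ih2 => exact ih1.trans ih2

open scoped Classical in
private lemma key : ∀ (n : ℕ) (hm tm : Fin n → Fin (n+1)), (∀ e, hm e ≠ tm e) →
    ((Matrix.of fun i j : Fin n => inc hm tm j i.castSucc).det)^2
      = if ∀ a b : Fin (n+1), Reach hm tm Set.univ a b then 1 else 0 := by
  intro n
  induction n with
  | zero =>
    intro hm tm _
    rw [Matrix.det_fin_zero, if_pos, one_pow]
    intro a b
    have hab : a = b := Subsingleton.elim (α := Fin 1) a b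
    subst hab; exact Relation.EqvGen.refl _
  | succ n ih =>
    intro hm tm hloop
    by_cases hc : ∀ a b : Fin (n+2), Reach hm tm Set.univ a b
    case neg =>
      rw [if_neg hc]
      push_neg at hc
      obtain ⟨a0, b0, hab⟩ := hc
      have hx : ∃ a, ¬ Reach hm tm Set.univ a (Fin.last (n+1)) := by
        by_contra hcon
        push_neg at hcon
        exact hab (Relation.EqvGen.trans _ _ _ (hcon a0) (Relation.EqvGen.symm _ _ (hcon b0)))
      obtain ⟨a, ha⟩ := hx
      have haL : a ≠ Fin.last (n+1) := fun h => ha (h ▸ Relation.EqvGen.refl a)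
      set f : Fin (n+2) → ℝ := fun u => if Reach hm tm Set.univ u a then 1 else 0 with hf
      have hfL : f (Fin.last (n+1)) = 0 := by
        rw [hf]; dsimp only
        exact if_neg (fun h => ha (Relation.EqvGen.symm _ _ h))
      have hedge : ∀ j, f (hm j) = f (tm j) := by
        intro j
        have hreach : Reach hm tm Set.univ (hm j) (tm j) :=
          Relation.EqvGen.rel _ _ ⟨j, trivial, rfl, rfl⟩
        rw [hf]; dsimp only
        by_cases h1 : Reach hm tm Set.univ (hm j) a
        · rw [if_pos h1]
          exact (if_pos (Relation.EqvGen.trans _ _ _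
            (Relation.EqvGen.symm _ _ hreach) h1)).symm
        · rw [if_neg h1]
          exact (if_neg (fun h2 => h1 (Relation.EqvGen.trans _ _ _ hreach h2))).symm
      have hdet : (Matrix.of fun i j : Fin (n+1) => inc hm tm j i.castSucc).det = 0 := by
        rw [← Matrix.det_transpose, ← Matrix.exists_mulVec_eq_zero_iff]
        refine ⟨fun i => f i.castSucc, ?_, ?_⟩
        · obtain ⟨a', ha'⟩ : ∃ a', Fin.castSucc a' = a := ⟨a.castPred haL, Fin.castSucc_castPred _ haL⟩
          intro h0
          have h1 := congrFun h0 a'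
          have h2 : f (Fin.castSucc a') = 1 := by
            rw [hf]; dsimp only; rw [ha']
            exact if_pos (Relation.EqvGen.refl _)
          simp only [Pi.zero_apply] at h1
          rw [h2] at h1
          exact one_ne_zero h1
        · funext j
          show ∑ i : Fin (n+1), (Matrix.of fun i j : Fin (n+1) => inc hm tm j i.castSucc)ᵀ j i
              * f i.castSucc = 0
          have h2 : ∑ u : Fin (n+2), inc hm tm j u * f u
              = ∑ i : Fin (n+1), inc hm tm j i.castSucc * f i.castSucc := by
            rw [Fin.sum_univ_castSucc]
            simp [hfL]
          have h3 : ∀ u, inc hm tm j u * f u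
              = (if hm j = u then f u else 0) - (if tm j = u then f u else 0) := by
            intro u
            rw [inc_eq_sub hm tm j (hloop j), sub_mul]
            congr 1 <;> (split <;> simp)
          calc ∑ i : Fin (n+1), (Matrix.of fun i j : Fin (n+1) => inc hm tm j i.castSucc)ᵀ j i
              * f i.castSucc
              = ∑ u : Fin (n+2), inc hm tm j u * f u := h2.symm
            _ = (∑ u : Fin (n+2), if hm j = u then f u else 0)
                - ∑ u : Fin (n+2), if tm j = u then f u else 0 := by
                rw [← Finset.sum_sub_distrib]
                exact Finset.sum_congr rfl fun u _ => h3 u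
            _ = f (hm j) - f (tm j) := by
                rw [Finset.sum_ite_eq, Finset.sum_ite_eq]
                simp
            _ = 0 := by rw [hedge j, sub_self]
      rw [hdet]
      norm_num
    case pos =>
      rw [if_pos hc]
      -- every vertex has an incident edge
      have hne2 : ∀ u : Fin (n+2), (Finset.univ.filter fun e => hm e = u ∨ tm e = u).Nonempty := by
        intro u
        rw [Finset.filter_nonempty_iff]
        by_contra hcon
        push_neg at hcon
        have hiso : ∀ e ∈ (Set.univ : Set (Fin (n+1))), hm e ≠ u ∧ tm e ≠ u := by
          intro e _
          exact hcon e (Finset.mem_univ e)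
        obtain ⟨u', hu'⟩ := Fintype.exists_ne_of_one_lt_card
          (by rw [Fintype.card_fin]; omega) u
        exact hu' ((reach_isolated hm tm Set.univ u hiso (hc u' u)).mpr rfl)
      have hsum : ∑ i : Fin (n+1), (Finset.univ.filter fun e =>
            hm e = i.castSucc ∨ tm e = i.castSucc).card
          + (Finset.univ.filter fun e =>
            hm e = Fin.last (n+1) ∨ tm e = Fin.last (n+1)).card = 2 * (n+1) := by
        have h0 := Fin.sum_univ_castSucc (n := n+1)
          (fun u => (Finset.univ.filter fun e => hm e = u ∨ tm e = u).card)
        rw [← h0]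
        have h1 : ∀ u, (Finset.univ.filter fun e => hm e = u ∨ tm e = u).card
            = ∑ e : Fin (n+1), if hm e = u ∨ tm e = u then 1 else 0 := fun u =>
          Finset.card_filter _ _
        rw [Finset.sum_congr rfl fun u _ => h1 u, Finset.sum_comm]
        have h2 : ∀ e : Fin (n+1),
            (∑ u : Fin (n+1+1), if hm e = u ∨ tm e = u then 1 else 0) = 2 := by
          intro e
          have h3 : (Finset.univ.filter fun u : Fin (n+1+1) => hm e = u ∨ tm e = u)
              = {hm e, tm e} := by
            ext u
            simp [eq_comm]
          calc (∑ u : Fin (n+1+1), if hm e = u ∨ tm e = u then 1 else 0)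
              = (Finset.univ.filter fun u : Fin (n+1+1) => hm e = u ∨ tm e = u).card :=
                (Finset.card_filter _ _).symm
            _ = 2 := by
                rw [h3, Finset.card_insert_of_notMem (by simp [hloop e]),
                  Finset.card_singleton]
        rw [Finset.sum_congr rfl fun e _ => h2 e, Finset.sum_const, Finset.card_univ,
          Fintype.card_fin, smul_eq_mul]
        omega
      -- there is a leaf which is not the last vertex
      have hleaf : ∃ v0 : Fin (n+1),
          (Finset.univ.filter fun e => hm e = v0.castSucc ∨ tm e = v0.castSucc).card = 1 := by
        by_contra hcon
        push_neg at hcon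
        have hge : ∀ v0 : Fin (n+1),
            2 ≤ (Finset.univ.filter fun e => hm e = v0.castSucc ∨ tm e = v0.castSucc).card := by
          intro v0
          have h1 := Finset.Nonempty.card_pos (hne2 v0.castSucc)
          have h2 := hcon v0
          omega
        have hlast := Finset.Nonempty.card_pos (hne2 (Fin.last (n+1)))
        have h6 : (Finset.univ : Finset (Fin (n+1))).card • 2
            ≤ ∑ i : Fin (n+1),
              (Finset.univ.filter fun e => hm e = i.castSucc ∨ tm e = i.castSucc).card :=
          Finset.card_nsmul_le_sum _ _ 2 (fun i _ => hge i)
        rw [Finset.card_univ, Fintype.card_fin, smul_eq_mul] at h6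
        omega
      obtain ⟨v0, hv0⟩ := hleaf
      obtain ⟨j0, hj0⟩ := Finset.card_eq_one.mp hv0
      have hinc : ∀ e, (hm e = v0.castSucc ∨ tm e = v0.castSucc) ↔ e = j0 := by
        intro e
        constructor
        · intro h
          have h1 : e ∈ Finset.univ.filter
              (fun e => hm e = v0.castSucc ∨ tm e = v0.castSucc) :=
            Finset.mem_filter.mpr ⟨Finset.mem_univ e, h⟩
          rw [hj0, Finset.mem_singleton] at h1
          exact h1
        · intro he
          have h1 := Finset.mem_singleton_self j0
          rw [← hj0] at h1
          exact he ▸ (Finset.mem_filter.mp h1).2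
      have hj0v : hm j0 = v0.castSucc ∨ tm j0 = v0.castSucc := (hinc j0).mpr rfl
      set u0 : Fin (n+2) := if hm j0 = v0.castSucc then tm j0 else hm j0 with hu0
      -- the contracted graph
      set hm' : Fin n → Fin (n+1) := fun k => v0.predAbove (hm (j0.succAbove k)) with hhm'
      set tm' : Fin n → Fin (n+1) := fun k => v0.predAbove (tm (j0.succAbove k)) with htm'
      have hnotv : ∀ k : Fin n,
          hm (j0.succAbove k) ≠ v0.castSucc ∧ tm (j0.succAbove k) ≠ v0.castSucc := by
        intro k
        have hne : j0.succAbove k ≠ j0 := Fin.succAbove_ne _ _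
        exact ⟨fun h => hne ((hinc _).mp (Or.inl h)), fun h => hne ((hinc _).mp (Or.inr h))⟩
      have hiff : ∀ (x : Fin (n+2)), x ≠ v0.castSucc → ∀ y : Fin (n+1),
          (v0.predAbove x = y ↔ x = (v0.castSucc).succAbove y) := by
        intro x hx y
        constructor
        · rintro rfl
          exact (Fin.succAbove_predAbove hx).symm
        · rintro rfl
          exact Fin.predAbove_succAbove v0 y
      have hloop' : ∀ k, hm' k ≠ tm' k := by
        intro k h
        apply hloop (j0.succAbove k)
        have h1 : hm (j0.succAbove k)
            = (v0.castSucc).succAbove (v0.predAbove (tm (j0.succAbove k))) :=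
          (hiff _ (hnotv k).1 _).mp h
        rw [Fin.succAbove_predAbove (hnotv k).2] at h1
        exact h1
      -- connectivity of the contracted graph
      set ρ : Fin (n+2) → Fin (n+1) :=
        fun u => v0.predAbove (if u = v0.castSucc then u0 else u) with hρ
      have hρstep : ∀ e ∈ (Set.univ : Set (Fin (n+1))),
          Reach hm' tm' Set.univ (ρ (hm e)) (ρ (tm e)) := by
        intro e _
        by_cases he : e = j0
        · subst he
          rcases hj0v with h | h
          · have htv : tm e ≠ v0.castSucc := fun h2 => hloop e (h.trans h2.symm)
            have e1 : ρ (hm e) = v0.predAbove (tm e) := by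
              rw [hρ]; dsimp only; rw [if_pos h, hu0, if_pos h]
            have e2 : ρ (tm e) = v0.predAbove (tm e) := by
              rw [hρ]; dsimp only; rw [if_neg htv]
            rw [e1, e2]; exact Relation.EqvGen.refl _
          · have hhv : hm e ≠ v0.castSucc := fun h2 => hloop e (h2.trans h.symm)
            have e1 : ρ (hm e) = v0.predAbove (hm e) := by
              rw [hρ]; dsimp only; rw [if_neg hhv]
            have e2 : ρ (tm e) = v0.predAbove (hm e) := by
              rw [hρ]; dsimp only; rw [if_pos h, hu0, if_neg hhv]
            rw [e1, e2]; exact Relation.EqvGen.refl _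
        · obtain ⟨k, hk⟩ := Fin.exists_succAbove_eq he
          have h1 := hnotv k
          rw [hk] at h1
          have e1 : ρ (hm e) = hm' k := by
            rw [hρ, hhm']; dsimp only; rw [if_neg h1.1, hk]
          have e2 : ρ (tm e) = tm' k := by
            rw [hρ, htm']; dsimp only; rw [if_neg h1.2, hk]
          rw [e1, e2]
          exact Relation.EqvGen.rel _ _ ⟨k, trivial, rfl, rfl⟩
      have hc' : ∀ a b : Fin (n+1), Reach hm' tm' Set.univ a b := by
        intro a b
        have h1 := reach_comap hm tm hm' tm' Set.univ Set.univ ρ hρstep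
          (hc ((v0.castSucc).succAbove a) ((v0.castSucc).succAbove b))
        have e1 : ∀ y : Fin (n+1), ρ ((v0.castSucc).succAbove y) = y := by
          intro y
          rw [hρ]; dsimp only
          rw [if_neg (Fin.succAbove_ne _ _), Fin.predAbove_succAbove]
        rwa [e1, e1] at h1
      -- Laplace expansion along row v0
      set M : Matrix (Fin (n+1)) (Fin (n+1)) ℝ :=
        Matrix.of fun i j => inc hm tm j i.castSucc with hM
      have hMrow : ∀ j, j ≠ j0 → M v0 j = 0 := by
        intro j hj
        show inc hm tm j v0.castSucc = 0
        unfold inc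
        rw [if_neg (fun h => hj ((hinc j).mp (Or.inl h))),
          if_neg (fun h => hj ((hinc j).mp (Or.inr h)))]
      have hsub : M.submatrix v0.succAbove j0.succAbove
          = Matrix.of fun i k : Fin n => inc hm' tm' k i.castSucc := by
        ext i k
        show inc hm tm (j0.succAbove k) (v0.succAbove i).castSucc = inc hm' tm' k i.castSucc
        unfold inc
        have i1 : (hm (j0.succAbove k) = (v0.succAbove i).castSucc) ↔ (hm' k = i.castSucc) := by
          rw [← Fin.castSucc_succAbove_castSucc]
          exact (hiff _ (hnotv k).1 i.castSucc).symm
        have i2 : (tm (j0.succAbove k) = (v0.succAbove i).castSucc) ↔ (tm' k = i.castSucc) := by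
          rw [← Fin.castSucc_succAbove_castSucc]
          exact (hiff _ (hnotv k).2 i.castSucc).symm
        exact if_congr i1 rfl (if_congr i2 rfl rfl)
      have hMv0j0 : M v0 j0 ^ 2 = 1 := by
        show (inc hm tm j0 v0.castSucc)^2 = 1
        unfold inc
        rcases hj0v with h | h
        · rw [if_pos h]; norm_num
        · rw [if_neg (fun h2 => hloop j0 (h2.trans h.symm)), if_pos h]; norm_num
      have hdet : M.det = (-1)^(v0 + j0 : ℕ) * M v0 j0
          * (M.submatrix v0.succAbove j0.succAbove).det := by
        rw [Matrix.det_succ_row M v0]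
        refine Finset.sum_eq_single j0 ?_ ?_
        · intro j _ hj
          rw [hMrow j hj]
          ring
        · intro h
          exact absurd (Finset.mem_univ j0) h
      show M.det ^ 2 = 1
      rw [hdet, mul_pow, mul_pow, hMv0j0, hsub]
      have h2 : ((-1 : ℝ)^(v0 + j0 : ℕ))^2 = 1 := by
        rw [← pow_mul, mul_comm, pow_mul]
        norm_num
      rw [h2, ih hm' tm' hloop', if_pos hc']
      ring

-- Weighted matrix-tree theorem:
-- `det M_Γ(t) = (∑_{T ∈ Tree(Γ)} ∏_{e ∉ T} t_e) / ∏_{e ∈ Γ₁} t_e`.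
open scoped Classical in
theorem weighted_matrix_tree {n : ℕ} {E : Type*} [Fintype E]
    (hm tm : E → Fin (n + 1))
    (hconn : ∀ a b : Fin (n + 1), Reach hm tm Set.univ a b)
    (hloop : ∀ e, hm e ≠ tm e)
    (w : E → ℝ) (hw : ∀ e, 0 < w e) :
    (lap hm tm w).det =
      (∑ T ∈ Finset.univ.filter fun T : Finset E => IsSpanningTree hm tm T,
        ∏ e ∈ Tᶜ, w e) / ∏ e, w e := by
  classical
  set B : Matrix (Fin n) E ℝ := Matrix.of fun i e => inc hm tm e i.castSucc with hB
  set C : Matrix E (Fin n) ℝ := Matrix.of fun e j => inc hm tm e j.castSucc / w e with hC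
  have hlap : lap hm tm w = B * C := by
    ext i j
    simp [lap, Matrix.mul_apply, hB, hC, mul_div_assoc]
  rw [hlap, cauchy_binet]
  have hterm : ∀ s : Finset E,
      (if h : s.card = n then
        (B.submatrix id (sel s h)).det * (C.submatrix (sel s h) id).det
      else 0)
      = if IsSpanningTree hm tm s then (∏ e ∈ s, w e)⁻¹ else 0 := by
    intro s
    by_cases h : s.card = n
    · rw [dif_pos h]
      set φ := sel s h with hφ
      have hCd : (C.submatrix φ id).det
          = (∏ i, (w (φ i))⁻¹) * (B.submatrix id φ).det := by
        have h1 : C.submatrix φ id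
            = Matrix.of fun i j => (w (φ i))⁻¹ * ((B.submatrix id φ)ᵀ i j) := by
          ext i j
          show inc hm tm (φ i) j.castSucc / w (φ i) = _
          rw [div_eq_inv_mul]
          rfl
        rw [h1, Matrix.det_mul_column, Matrix.det_transpose]
      rw [hCd]
      have hBd : (B.submatrix id φ).det ^ 2
          = if ∀ a b : Fin (n+1), Reach hm tm (↑s) a b then 1 else 0 := by
        have h2 : B.submatrix id φ
            = Matrix.of fun i j : Fin n =>
              inc (fun k => hm (φ k)) (fun k => tm (φ k)) j i.castSucc := rfl
        rw [h2, key n _ _ (fun k => hloop (φ k))]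
        have h3 : (∀ a b : Fin (n+1),
              Reach (fun k => hm (φ k)) (fun k => tm (φ k)) Set.univ a b)
            ↔ (∀ a b : Fin (n+1), Reach hm tm (↑s) a b) := by
          constructor
          · intro hr a b
            exact reach_comap (fun k => hm (φ k)) (fun k => tm (φ k)) hm tm
              Set.univ (↑s) id
              (fun k _ => Relation.EqvGen.rel _ _ ⟨φ k, sel_mem s h k, rfl, rfl⟩) (hr a b)
          · intro hr a b
            refine reach_comap hm tm _ _ (↑s) Set.univ id ?_ (hr a b)
            intro e he
            obtain ⟨k, hk⟩ := sel_surj s h he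
            exact Relation.EqvGen.rel _ _ ⟨k, trivial, by simp only [hφ, hk, id_eq], by simp only [hφ, hk, id_eq]⟩
        by_cases h4 : ∀ a b : Fin (n+1), Reach hm tm (↑s) a b
        · rw [if_pos (h3.mpr h4), if_pos h4]
        · rw [if_neg (fun hx => h4 (h3.mp hx)), if_neg h4]
      have h5 : (B.submatrix id φ).det * ((∏ i, (w (φ i))⁻¹) * (B.submatrix id φ).det)
          = (∏ i, (w (φ i))⁻¹) * (B.submatrix id φ).det ^ 2 := by ring
      rw [h5, hBd]
      have h6 : (∏ i, (w (φ i))⁻¹) = (∏ e ∈ s, w e)⁻¹ := by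
        rw [← Finset.prod_inv_distrib]
        congr 1
        exact Finset.prod_bij (fun i _ => φ i) (fun i _ => sel_mem s h i)
          (fun a _ b _ hab => sel_inj s h hab)
          (fun e he => by
            obtain ⟨k, hk⟩ := sel_surj s h he
            exact ⟨k, Finset.mem_univ k, hk⟩)
          (fun i _ => rfl)
      have h8 : (∀ a b : Fin (n+1), Reach hm tm (↑s) a b) ↔ IsSpanningTree hm tm s :=
        ⟨fun hr => ⟨h, hr⟩, fun hs => hs.2⟩
      rw [mul_ite, mul_one, mul_zero, if_congr h8 h6 rfl]
    · rw [dif_neg h, if_neg (fun hs => h hs.1)]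
  rw [Finset.sum_congr rfl fun s _ => hterm s, ← Finset.sum_filter]
  have hprodne : (∏ e, w e) ≠ 0 := Finset.prod_ne_zero_iff.mpr fun e _ => (hw e).ne'
  rw [eq_div_iff hprodne, Finset.sum_mul]
  refine Finset.sum_congr rfl fun T _ => ?_
  have h9 : (∏ e, w e) = (∏ e ∈ T, w e) * ∏ e ∈ Tᶜ, w e :=
    (Finset.prod_mul_prod_compl T w).symm
  have hTne : (∏ e ∈ T, w e) ≠ 0 := Finset.prod_ne_zero_iff.mpr fun e _ => (hw e).ne'
  rw [h9, ← mul_assoc, inv_mul_cancel₀ hTne, one_mul]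
end

section
/- Let Γ be a connected finite directed graph without self-loops with vertex set {1,…,N}, N ≥ 2, and let t = (t_e)_{e∈Γ₁} be positive weights. Then M_Γ(t) is invertible, and for every edge e ∈ Γ₁ and every 1 ≤ j ≤ N−1, the quantity (d_Γ^{−1})^{ej} := (1/t_e) Σ_{i=1}^{N−1} ρ^e_i (M_Γ(t)^{−1})_{ij} satisfies |(d_Γ^{−1})^{ej}| ≤ 2. -/
open Finset

/-- Extension of a vector on the first `n` vertices by `0` on the last vertex. -/
def extZ {n : ℕ} (x : Fin n → ℝ) : Fin (n + 1) → ℝ := Fin.snoc x 0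

@[simp] lemma extZ_castSucc {n : ℕ} (x : Fin n → ℝ) (i : Fin n) :
    extZ x i.castSucc = x i := Fin.snoc_castSucc _ _ _

@[simp] lemma extZ_last {n : ℕ} (x : Fin n → ℝ) : extZ x (Fin.last n) = 0 :=
  Fin.snoc_last _ _

section aux
variable {n : ℕ} {E : Type*} [Fintype E] (hm tm : E → Fin (n + 1))

omit [Fintype E] in
lemma inc_dot (f : E) (hf : hm f ≠ tm f) (ψ : Fin (n + 1) → ℝ) :
    ∑ v, inc hm tm f v * ψ v = ψ (hm f) - ψ (tm f) := by
  have key : ∀ v, inc hm tm f v * ψ v =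
      (if hm f = v then ψ v else 0) - (if tm f = v then ψ v else 0) := by
    intro v
    unfold inc
    by_cases h1 : hm f = v
    · have h2 : tm f ≠ v := fun h2 => hf (h1.trans h2.symm)
      simp [h1, h2]
    · by_cases h2 : tm f = v <;> simp [h1, h2]
  rw [Finset.sum_congr rfl (fun v _ => key v), Finset.sum_sub_distrib]
  simp

omit [Fintype E] in
lemma sum_inc_castSucc (f : E) (hf : hm f ≠ tm f) (x : Fin n → ℝ) :
    ∑ i : Fin n, inc hm tm f i.castSucc * x i = extZ x (hm f) - extZ x (tm f) := by
  rw [← inc_dot hm tm f hf (extZ x), Fin.sum_univ_castSucc]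
  simp

lemma mulVec_lap (w : E → ℝ) (hloop : ∀ e, hm e ≠ tm e) (x : Fin n → ℝ) (i : Fin n) :
    (lap hm tm w).mulVec x i =
      ∑ f, inc hm tm f i.castSucc * ((extZ x (hm f) - extZ x (tm f)) / w f) := by
  unfold Matrix.mulVec dotProduct lap
  simp only [Matrix.of_apply, Finset.sum_mul]
  rw [Finset.sum_comm]
  refine Finset.sum_congr rfl fun f _ => ?_
  rw [← sum_inc_castSucc hm tm f (hloop f) x, Finset.sum_div, Finset.mul_sum]
  refine Finset.sum_congr rfl fun k _ => ?_
  ring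

/-- Connectivity forces functions constant on edges to be globally constant. -/
lemma const_of_conn (φ : Fin (n + 1) → ℝ)
    (hconn : ∀ a b : Fin (n + 1), Reach hm tm Set.univ a b)
    (h : ∀ f, φ (hm f) = φ (tm f)) (v : Fin (n + 1)) : φ v = φ (Fin.last n) := by
  have key : ∀ a b : Fin (n + 1),
      Relation.EqvGen (fun a b => ∃ e ∈ (Set.univ : Set E), hm e = a ∧ tm e = b) a b →
      φ a = φ b := by
    intro a b hab
    induction hab with
    | rel a b hab => obtain ⟨e, -, he, te⟩ := hab; rw [← he, ← te]; exact h e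
    | refl a => rfl
    | symm a b _ ih => exact ih.symm
    | trans a b c _ _ ih1 ih2 => exact ih1.trans ih2
  exact key _ _ (hconn v (Fin.last n))

lemma lap_posDef (w : E → ℝ) (hw : ∀ e, 0 < w e) (hloop : ∀ e, hm e ≠ tm e)
    (hconn : ∀ a b : Fin (n + 1), Reach hm tm Set.univ a b) :
    (lap hm tm w).PosDef := by
  rw [Matrix.posDef_iff_dotProduct_mulVec]
  constructor
  · ext i k
    unfold lap
    simp only [Matrix.conjTranspose_apply, Matrix.of_apply, star_trivial]
    exact Finset.sum_congr rfl fun f _ => by ring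
  · intro x hx
    have hdot : dotProduct (star x) (Matrix.mulVec (lap hm tm w) x) =
        ∑ f, (extZ x (hm f) - extZ x (tm f))^2 / w f := by
      unfold dotProduct
      simp only [star_trivial, mulVec_lap hm tm w hloop x, Finset.mul_sum]
      rw [Finset.sum_comm]
      refine Finset.sum_congr rfl fun f _ => ?_
      have := sum_inc_castSucc hm tm f (hloop f) x
      calc ∑ i, x i * (inc hm tm f i.castSucc * ((extZ x (hm f) - extZ x (tm f)) / w f))
          = (∑ i, inc hm tm f i.castSucc * x i) * ((extZ x (hm f) - extZ x (tm f)) / w f) := by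
            rw [Finset.sum_mul]; exact Finset.sum_congr rfl fun k _ => by ring
        _ = (extZ x (hm f) - extZ x (tm f))^2 / w f := by rw [this]; ring
    rw [hdot]
    have hnonneg : ∀ f ∈ Finset.univ (α := E),
        0 ≤ (extZ x (hm f) - extZ x (tm f))^2 / w f := fun f _ =>
      div_nonneg (sq_nonneg _) (hw f).le
    have hex : ∃ f, (extZ x (hm f) - extZ x (tm f))^2 / w f ≠ 0 := by
      by_contra hall
      push_neg at hall
      have heq : ∀ f, extZ x (hm f) = extZ x (tm f) := by
        intro f
        have h0 := hall f
        rw [div_eq_zero_iff] at h0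
        rcases h0 with h0 | h0
        · have := pow_eq_zero_iff (n := 2) (by norm_num) |>.mp h0
          linarith [sub_eq_zero.mp this]
        · exact absurd h0 (hw f).ne'
      have hconst := const_of_conn hm tm (extZ x) hconn heq
      apply hx
      funext i
      simpa using hconst i.castSucc
    obtain ⟨f, hf⟩ := hex
    exact Finset.sum_pos' hnonneg
      ⟨f, Finset.mem_univ f, lt_of_le_of_ne (hnonneg f (Finset.mem_univ f)) (Ne.symm hf)⟩

end aux

-- `M_Γ(t)` is invertible and `|(d_Γ^{-1})^{ej}| = |(1/t_e) ∑_i ρ^e_i (M_Γ(t)^{-1})_{ij}| ≤ 2`.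
theorem lap_inverse_incidence_bound {n : ℕ} (hn : 1 ≤ n) {E : Type*} [Fintype E]
    (hm tm : E → Fin (n + 1))
    (hconn : ∀ a b : Fin (n + 1), Reach hm tm Set.univ a b)
    (hloop : ∀ e, hm e ≠ tm e)
    (w : E → ℝ) (hw : ∀ e, 0 < w e) (e : E) (j : Fin n) :
    IsUnit (lap hm tm w) ∧
    |(1 / w e) * ∑ i : Fin n, inc hm tm e i.castSucc * (lap hm tm w)⁻¹ i j| ≤ 2 := by
  have hpd := lap_posDef hm tm w hw hloop hconn
  have hU : IsUnit (lap hm tm w) := hpd.isUnit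
  refine ⟨hU, ?_⟩
  have hdet : IsUnit (lap hm tm w).det := (Matrix.isUnit_iff_isUnit_det _).mp hU
  set x : Fin n → ℝ := fun i => (lap hm tm w)⁻¹ i j with hxdef
  set φ : Fin (n + 1) → ℝ := extZ x with hphi
  set c : E → ℝ := fun f => (φ (hm f) - φ (tm f)) / w f with hcdef
  -- the quantity is the current `c e`
  have hquant : (1 / w e) * ∑ i : Fin n, inc hm tm e i.castSucc * (lap hm tm w)⁻¹ i j
      = c e := by
    rw [show (∑ i : Fin n, inc hm tm e i.castSucc * (lap hm tm w)⁻¹ i j)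
        = ∑ i : Fin n, inc hm tm e i.castSucc * x i from rfl,
      sum_inc_castSucc hm tm e (hloop e) x, hcdef, one_div_mul_eq_div]
  rw [hquant]
  -- divergence identities
  have hdiv : ∀ i : Fin n, ∑ f, inc hm tm f i.castSucc * c f = if i = j then 1 else 0 := by
    intro i
    have h1 : Matrix.mulVec (lap hm tm w) x i = ((lap hm tm w) * (lap hm tm w)⁻¹) i j := by
      rw [Matrix.mul_apply]; rfl
    rw [Matrix.mul_nonsing_inv _ hdet, Matrix.one_apply] at h1
    rw [← h1, mulVec_lap hm tm w hloop x i]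
  have hdivlast : ∑ f, inc hm tm f (Fin.last n) * c f = -1 := by
    have htotal : ∑ v, ∑ f, inc hm tm f v * c f = 0 := by
      rw [Finset.sum_comm]
      refine Finset.sum_eq_zero fun f _ => ?_
      have h0 : ∑ v, inc hm tm f v * ((fun _ : Fin (n+1) => (1:ℝ)) v) = 1 - 1 :=
        inc_dot hm tm f (hloop f) _
      simp only [mul_one] at h0
      rw [← Finset.sum_mul, h0]; ring
    rw [Fin.sum_univ_castSucc] at htotal
    have : ∑ i : Fin n, ∑ f, inc hm tm f i.castSucc * c f = 1 := by
      rw [Finset.sum_congr rfl fun i _ => hdiv i]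
      simp
    linarith
  -- if no potential drop across e, the current vanishes
  by_cases hne : φ (hm e) = φ (tm e)
  · rw [hcdef]
    simp only [hne, sub_self, zero_div, abs_zero]
    norm_num
  -- otherwise, cut at the midlevel `s`
  set s : ℝ := (φ (hm e) + φ (tm e)) / 2 with hs
  set χ : Fin (n + 1) → ℝ := fun v => if s < φ v then 1 else 0 with hchi
  have hterm : ∀ f, 0 ≤ c f * (χ (hm f) - χ (tm f)) := by
    intro f
    by_cases h1 : s < φ (hm f) <;> by_cases h2 : s < φ (tm f) <;>
      simp only [hchi, h1, h2, if_true, if_false, sub_self, mul_zero, sub_zero,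
        zero_sub, mul_one, le_refl]
    · push_neg at h2
      exact div_nonneg (by linarith) (hw f).le
    · push_neg at h1
      have hcf : c f ≤ 0 := div_nonpos_iff.mpr (Or.inr ⟨by linarith, (hw f).le⟩)
      linarith
  have hterme : |c e| ≤ c e * (χ (hm e) - χ (tm e)) := by
    rcases lt_or_gt_of_ne hne with h | h
    · have h1 : ¬ s < φ (hm e) := by rw [hs]; push_neg; linarith
      have h2 : s < φ (tm e) := by rw [hs]; linarith
      have hcf : c e ≤ 0 := div_nonpos_iff.mpr (Or.inr ⟨by linarith, (hw e).le⟩)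
      simp only [hchi, h1, h2, if_true, if_false, zero_sub, mul_neg, mul_one]
      rw [abs_of_nonpos hcf]
    · have h1 : s < φ (hm e) := by rw [hs]; linarith
      have h2 : ¬ s < φ (tm e) := by rw [hs]; push_neg; linarith
      have hcf : 0 ≤ c e := div_nonneg (by linarith) (hw e).le
      simp only [hchi, h1, h2, if_true, if_false, sub_zero, mul_one]
      rw [abs_of_nonneg hcf]
  have hsum : ∑ f, c f * (χ (hm f) - χ (tm f)) = ∑ v, χ v * ∑ f, inc hm tm f v * c f := by
    simp only [Finset.mul_sum]
    rw [Finset.sum_comm]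
    refine Finset.sum_congr rfl fun f _ => ?_
    rw [show ∑ v, χ v * (inc hm tm f v * c f) = (∑ v, inc hm tm f v * χ v) * c f from by
        rw [Finset.sum_mul]; exact Finset.sum_congr rfl fun v _ => by ring,
      inc_dot hm tm f (hloop f) χ]
    ring
  have hrhs : ∑ v, χ v * ∑ f, inc hm tm f v * c f ≤ 1 := by
    rw [Fin.sum_univ_castSucc, hdivlast]
    have h1 : ∑ i : Fin n, χ i.castSucc * ∑ f, inc hm tm f i.castSucc * c f
        = χ j.castSucc := by
      rw [Finset.sum_congr rfl fun i _ => by rw [hdiv i]]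
      simp [Finset.sum_ite_eq']
    rw [h1]
    have hj : χ j.castSucc ≤ 1 := by rw [hchi]; dsimp only; split <;> norm_num
    have hl : 0 ≤ χ (Fin.last n) := by rw [hchi]; dsimp only; split <;> norm_num
    nlinarith
  have hchain : |c e| ≤ 1 := by
    calc |c e| ≤ c e * (χ (hm e) - χ (tm e)) := hterme
      _ ≤ ∑ f, c f * (χ (hm f) - χ (tm f)) :=
        Finset.single_le_sum (fun f _ => hterm f) (Finset.mem_univ e)
      _ = ∑ v, χ v * ∑ f, inc hm tm f v * c f := hsum
      _ ≤ 1 := hrhs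
  linarith [hchain]
end

section
/- Let Γ be a connected finite directed graph without self-loops with vertex set {1,…,N}, and let Γ' be a subgraph with edge set Γ'₁. Then: (i) for every spanning tree T of Γ, h₁(Γ') ≤ |Γ'₁ ∖ T| ≤ h₁(Γ) = |Γ₁| − N + 1; and (ii) there exists a spanning tree T of Γ with |Γ'₁ ∖ T| = h₁(Γ'). Consequently, after substituting t_e = ρ ξ_e for e ∈ Γ'₁ (with all ξ_e and the remaining t_e held fixed and positive), the spanning-tree polynomial Σ_{T ∈ Tree(Γ)} Π_{e ∉ T} t_e is a polynomial in ρ whose nonzero monomials have ρ-degree between h₁(Γ') and h₁(Γ), and whose coefficient in degree h₁(Γ') is nonzero. -/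
open Finset

/-- The vertex set of the subgraph generated by the edge set `S`:
all endpoints of edges of `S`. -/
def vertexSet {n : ℕ} {E : Type*} [DecidableEq E]
    (hm tm : E → Fin (n + 1)) (S : Finset E) : Finset (Fin (n + 1)) :=
  S.image hm ∪ S.image tm

/-- The number of connected components of the subgraph with edge set `S`
(on its vertex set `vertexSet hm tm S`). -/
noncomputable def numComponentsOn {n : ℕ} {E : Type*} [DecidableEq E]
    (hm tm : E → Fin (n + 1)) (S : Finset E) : ℕ :=
  Nat.card (Quotient (Setoid.comap
    (Subtype.val : {v // v ∈ vertexSet hm tm S} → Fin (n + 1))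
    (Relation.EqvGen.setoid fun a b => ∃ e ∈ (↑S : Set E), hm e = a ∧ tm e = b)))

/-- The first Betti number `h₁(Γ') = |Γ'₁| - |Γ'₀| + c(Γ')` of the subgraph with
edge set `S` (written here with truncated subtraction as `|Γ'₁| + c(Γ') - |Γ'₀|`). -/
noncomputable def betti1 {n : ℕ} {E : Type*} [DecidableEq E]
    (hm tm : E → Fin (n + 1)) (S : Finset E) : ℕ :=
  S.card + numComponentsOn hm tm S - (vertexSet hm tm S).card

section Aux

set_option linter.unusedSectionVars false
set_option linter.unusedVariables false

variable {n : ℕ} {E : Type*} [Fintype E] [DecidableEq E] (hm tm : E → Fin (n + 1))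

/-- The setoid of reachability through edges in `A`. -/
def reachSetoid (A : Finset E) : Setoid (Fin (n + 1)) :=
  Relation.EqvGen.setoid fun a b => ∃ e ∈ (↑A : Set E), hm e = a ∧ tm e = b

/-- Number of connected components on the full vertex set `Fin (n+1)`. -/
noncomputable def kap (A : Finset E) : ℕ :=
  Nat.card (Quotient (reachSetoid hm tm A))

lemma reach_mono {A B : Finset E} (hAB : A ⊆ B) {a b : Fin (n + 1)}
    (h : Reach hm tm (↑A) a b) : Reach hm tm (↑B) a b :=
  Relation.EqvGen.mono (r := fun a b => ∃ e ∈ (↑A : Set E), hm e = a ∧ tm e = b)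
    (p := fun a b => ∃ e ∈ (↑B : Set E), hm e = a ∧ tm e = b)
    (fun a b ⟨e, he, h1, h2⟩ => ⟨e, hAB he, h1, h2⟩) a b h

lemma kap_mono {A B : Finset E} (hAB : A ⊆ B) : kap hm tm B ≤ kap hm tm A := by
  apply Nat.card_le_card_of_surjective
    (Quotient.map' id (fun a b h => reach_mono hm tm hAB h))
  intro c
  induction c using Quotient.inductionOn' with
  | h a => exact ⟨Quotient.mk'' a, rfl⟩

lemma kap_empty : kap hm tm (∅ : Finset E) = n + 1 := by
  have hinj : ∀ a b : Fin (n + 1), Reach hm tm (↑(∅ : Finset E)) a b → a = b := by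
    intro a b h
    induction h with
    | rel a b hab => obtain ⟨e, he, -⟩ := hab; simp at he
    | refl a => rfl
    | symm a b _ ih => exact ih.symm
    | trans a b c _ _ ih1 ih2 => exact ih1.trans ih2
  have : Function.Bijective (Quotient.mk (reachSetoid hm tm (∅ : Finset E))) :=
    ⟨fun a b h => hinj a b (Quotient.exact h), Quotient.exists_rep⟩
  rw [kap, ← Nat.card_eq_of_bijective _ this]
  simp

lemma reach_insert {e : E} {A : Finset E} {a b : Fin (n + 1)}
    (h : Reach hm tm (↑(insert e A)) a b) :
    Reach hm tm (↑A) a b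
      ∨ (Reach hm tm (↑A) a (hm e) ∧ Reach hm tm (↑A) (tm e) b)
      ∨ (Reach hm tm (↑A) a (tm e) ∧ Reach hm tm (↑A) (hm e) b) := by
  set R : Fin (n+1) → Fin (n+1) → Prop := Reach hm tm (↑A) with hR
  have rfl' : ∀ a, R a a := fun a => Relation.EqvGen.refl a
  have sy : ∀ {u v}, R u v → R v u := fun h => Relation.EqvGen.symm _ _ h
  have tr : ∀ {u v w}, R u v → R v w → R u w := fun h1 h2 => Relation.EqvGen.trans _ _ _ h1 h2
  induction h with
  | rel a b hab =>
    obtain ⟨f, hf, h1, h2⟩ := hab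
    rcases Finset.mem_insert.mp hf with h | hfA
    · subst h; right; left; exact ⟨h1 ▸ rfl' a, h2 ▸ rfl' b⟩
    · left; exact Relation.EqvGen.rel _ _ ⟨f, hfA, h1, h2⟩
  | refl a => left; exact rfl' a
  | symm a b _ ih =>
    rcases ih with h | ⟨h1, h2⟩ | ⟨h1, h2⟩
    · left; exact sy h
    · right; right; exact ⟨sy h2, sy h1⟩
    · right; left; exact ⟨sy h2, sy h1⟩
  | trans a b c _ _ ih1 ih2 =>
    rcases ih1 with h1 | ⟨h1, h1'⟩ | ⟨h1, h1'⟩ <;>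
      rcases ih2 with h2 | ⟨h2, h2'⟩ | ⟨h2, h2'⟩
    · left; exact tr h1 h2
    · right; left; exact ⟨tr h1 h2, h2'⟩
    · right; right; exact ⟨tr h1 h2, h2'⟩
    · right; left; exact ⟨h1, tr h1' h2⟩
    · left; exact tr (tr h1 (sy h2)) (tr (sy h1') h2')
    · left; exact tr h1 h2'
    · right; right; exact ⟨h1, tr h1' h2⟩
    · left; exact tr h1 h2'
    · left; exact tr (tr h1 (sy h2)) (tr (sy h1') h2')

lemma kap_le_kap_insert_add_one (e : E) (A : Finset E) :
    kap hm tm A ≤ kap hm tm (insert e A) + 1 := by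
  classical
  set sA := reachSetoid hm tm A
  set sB := reachSetoid hm tm (insert e A)
  letI : Fintype (Quotient sA) := Fintype.ofFinite _
  letI : Fintype (Quotient sB) := Fintype.ofFinite _
  have hle : ∀ a b, sA a b → sB a b := fun a b h =>
    reach_mono hm tm (Finset.subset_insert e A) h
  set f : Quotient sA → Quotient sB := Quotient.map' id hle with hf
  have key : ∀ c1 c2 : Quotient sA, c1 ≠ ⟦tm e⟧ → c2 ≠ ⟦tm e⟧ → f c1 = f c2 → c1 = c2 := by
    intro c1 c2 h1 h2 hfc
    induction c1 using Quotient.inductionOn with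
    | h a =>
    induction c2 using Quotient.inductionOn with
    | h b =>
    have hab : sB a b := Quotient.exact' hfc
    rcases reach_insert hm tm hab with h | ⟨ha, hb⟩ | ⟨ha, hb⟩
    · exact Quotient.sound h
    · exact absurd (Quotient.sound (Relation.EqvGen.symm _ _ hb)) h2
    · exact absurd (Quotient.sound ha) h1
  have hcard : Fintype.card (Quotient sA) ≤ Fintype.card (Quotient sB) + 1 := by
    have hinj : Set.InjOn f ((Finset.univ.erase (⟦tm e⟧ : Quotient sA)) : Finset _) := by
      intro c1 hc1 c2 hc2 h
      simp only [Finset.coe_erase, Set.mem_diff, Finset.mem_coe, Finset.mem_univ,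
        Set.mem_singleton_iff] at hc1 hc2
      exact key c1 c2 (by simpa using hc1.2) (by simpa using hc2.2) h
    have := Finset.card_le_card_of_injOn f (fun c _ => Finset.mem_univ (f c)) hinj
    have h1 : (Finset.univ.erase (⟦tm e⟧ : Quotient sA)).card
        = Fintype.card (Quotient sA) - 1 := by
      rw [Finset.card_erase_of_mem (Finset.mem_univ _), Finset.card_univ]
    rw [h1, Finset.card_univ] at this
    omega
  calc kap hm tm A = Fintype.card (Quotient sA) := Nat.card_eq_fintype_card
    _ ≤ Fintype.card (Quotient sB) + 1 := hcard
    _ = kap hm tm (insert e A) + 1 := by rw [← Nat.card_eq_fintype_card]; rfl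

lemma kap_insert_lt {e : E} {A : Finset E} (h : ¬ Reach hm tm (↑A) (hm e) (tm e)) :
    kap hm tm (insert e A) < kap hm tm A := by
  classical
  set sA := reachSetoid hm tm A
  set sB := reachSetoid hm tm (insert e A)
  letI : Fintype (Quotient sA) := Fintype.ofFinite _
  letI : Fintype (Quotient sB) := Fintype.ofFinite _
  have hle : ∀ a b, sA a b → sB a b := fun a b hh =>
    reach_mono hm tm (Finset.subset_insert e A) hh
  set f : Quotient sA → Quotient sB := Quotient.map' id hle with hf
  have hsurj : Function.Surjective f := by
    intro c; induction c using Quotient.inductionOn with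
    | h a => exact ⟨⟦a⟧, rfl⟩
  have hninj : ¬ Function.Injective f := by
    intro hinj
    have : (⟦hm e⟧ : Quotient sA) = ⟦tm e⟧ := by
      apply hinj
      exact Quotient.sound (Relation.EqvGen.rel _ _
        ⟨e, by simp, rfl, rfl⟩)
    exact h (Quotient.exact this)
  have := Fintype.card_lt_of_surjective_not_injective f hsurj hninj
  rw [kap, kap, Nat.card_eq_fintype_card, Nat.card_eq_fintype_card]
  exact this

/-- Adding edges decreases the component count by at most one each. -/
lemma kap_add_card_mono : ∀ (k : ℕ) (A B : Finset E), A ⊆ B → (B \ A).card = k →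
    kap hm tm A + A.card ≤ kap hm tm B + B.card := by
  intro k
  induction k with
  | zero =>
    intro A B hAB h0
    have : A = B := Finset.Subset.antisymm hAB (fun x hx => by
      by_contra hxa
      exact absurd (Finset.card_eq_zero.mp h0 ▸ Finset.mem_sdiff.mpr ⟨hx, hxa⟩)
        (Finset.notMem_empty x))
    rw [this]
  | succ k ih =>
    intro A B hAB hcard
    have hne : (B \ A).Nonempty := Finset.card_pos.mp (by omega)
    obtain ⟨e, he⟩ := hne
    obtain ⟨heB, heA⟩ := Finset.mem_sdiff.mp he
    have hsub : insert e A ⊆ B := Finset.insert_subset heB hAB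
    have hcard' : (B \ insert e A).card = k := by
      rw [Finset.sdiff_insert]
      rw [Finset.card_erase_of_mem he, hcard]; omega
    have h1 := kap_le_kap_insert_add_one hm tm e A
    have h2 := ih (insert e A) B hsub hcard'
    rw [Finset.card_insert_of_notMem heA] at h2
    omega

/-- Greedy extension lemma: a "forest" `A` inside `B` extends to a spanning forest of `B`. -/
lemma greedy : ∀ (k : ℕ) (A B : Finset E), A ⊆ B → (B \ A).card = k →
    kap hm tm A + A.card = n + 1 →
    ∃ F : Finset E, A ⊆ F ∧ F ⊆ B ∧ kap hm tm F = kap hm tm B ∧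
      kap hm tm F + F.card = n + 1 := by
  intro k
  induction k with
  | zero =>
    intro A B hAB h0 hA
    have : A = B := Finset.Subset.antisymm hAB (fun x hx => by
      by_contra hxa
      exact absurd (Finset.card_eq_zero.mp h0 ▸ Finset.mem_sdiff.mpr ⟨hx, hxa⟩)
        (Finset.notMem_empty x))
    exact ⟨A, Finset.Subset.refl A, hAB, by rw [this], hA⟩
  | succ k ih =>
    intro A B hAB hcard hA
    by_cases hk : kap hm tm A = kap hm tm B
    · exact ⟨A, Finset.Subset.refl A, hAB, hk, hA⟩
    · have hex : ∃ e ∈ B, ¬ Reach hm tm (↑A) (hm e) (tm e) := by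
        by_contra hno
        push_neg at hno
        have hBA : ∀ a b, Reach hm tm (↑B) a b → Reach hm tm (↑A) a b := by
          intro a b h
          induction h with
          | rel a b hab =>
            obtain ⟨e, he, h1, h2⟩ := hab
            exact h1 ▸ h2 ▸ hno e he
          | refl a => exact Relation.EqvGen.refl a
          | symm a b _ ih => exact Relation.EqvGen.symm _ _ ih
          | trans a b c _ _ ih1 ih2 => exact Relation.EqvGen.trans _ _ _ ih1 ih2
        have : reachSetoid hm tm A = reachSetoid hm tm B := by
          apply Setoid.ext
          intro a b
          exact ⟨fun h => reach_mono hm tm hAB h, fun h => hBA a b h⟩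
        exact hk (by rw [kap, kap, this])
      obtain ⟨e, heB, hne⟩ := hex
      have heA : e ∉ A := fun h =>
        hne (Relation.EqvGen.rel _ _ ⟨e, h, rfl, rfl⟩)
      have hlt := kap_insert_lt hm tm hne
      have hle := kap_le_kap_insert_add_one hm tm e A
      have hA' : kap hm tm (insert e A) + (insert e A).card = n + 1 := by
        rw [Finset.card_insert_of_notMem heA]; omega
      have hsub : insert e A ⊆ B := Finset.insert_subset heB hAB
      have hcard' : (B \ insert e A).card = k := by
        rw [Finset.sdiff_insert, Finset.card_erase_of_mem (Finset.mem_sdiff.mpr ⟨heB, heA⟩),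
          hcard]
        omega
      obtain ⟨F, h1, h2, h3, h4⟩ := ih (insert e A) B hsub hcard' hA'
      exact ⟨F, (Finset.subset_insert e A).trans h1, h2, h3, h4⟩

lemma kap_eq_one_iff (A : Finset E) :
    kap hm tm A = 1 ↔ ∀ a b : Fin (n + 1), Reach hm tm (↑A) a b := by
  rw [kap, Nat.card_eq_one_iff_unique]
  constructor
  · rintro ⟨hsub, -⟩ a b
    exact Quotient.exact (hsub.elim (⟦a⟧ : Quotient (reachSetoid hm tm A)) ⟦b⟧)
  · intro h
    refine ⟨⟨fun c1 c2 => ?_⟩, ⟨⟦0⟧⟩⟩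
    induction c1 using Quotient.inductionOn with
    | h a =>
    induction c2 using Quotient.inductionOn with
    | h b => exact Quotient.sound (h a b)

lemma reach_endpoints {S : Finset E} {a b : Fin (n + 1)}
    (h : Reach hm tm (↑S) a b) :
    a = b ∨ (a ∈ vertexSet hm tm S ∧ b ∈ vertexSet hm tm S) := by
  induction h with
  | rel a b hab =>
    obtain ⟨e, he, h1, h2⟩ := hab
    right
    constructor
    · exact Finset.mem_union_left _ (Finset.mem_image.mpr ⟨e, he, h1⟩)
    · exact Finset.mem_union_right _ (Finset.mem_image.mpr ⟨e, he, h2⟩)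
  | refl a => left; rfl
  | symm a b _ ih => tauto
  | trans a b c _ _ ih1 ih2 =>
    rcases ih1 with rfl | ⟨h1, h2⟩
    · exact ih2
    · rcases ih2 with rfl | ⟨h3, h4⟩ <;> tauto

lemma kap_vertexSet (S : Finset E) :
    kap hm tm S + (vertexSet hm tm S).card = numComponentsOn hm tm S + (n + 1) := by
  classical
  set s := reachSetoid hm tm S with hs
  set V := vertexSet hm tm S with hV
  set s' := Setoid.comap (Subtype.val : {v // v ∈ V} → Fin (n + 1)) s with hs'
  set φ : Quotient s' ⊕ {v : Fin (n+1) // v ∉ V} → Quotient s :=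
    Sum.elim
      (Quotient.lift (fun u : {v // v ∈ V} => (⟦u.val⟧ : Quotient s))
        (fun u v h => Quotient.sound h))
      (fun v => ⟦v.val⟧) with hφ
  have hbij : Function.Bijective φ := by
    constructor
    · rintro (c1 | v1) (c2 | v2) h
      · induction c1 using Quotient.inductionOn with
        | h u =>
        induction c2 using Quotient.inductionOn with
        | h w =>
        simp only [hφ, Sum.elim_inl, Quotient.lift_mk] at h
        exact congrArg Sum.inl (Quotient.sound (Quotient.exact h : s u.val w.val))
      · induction c1 using Quotient.inductionOn with
        | h u =>
        simp only [hφ, Sum.elim_inl, Sum.elim_inr, Quotient.lift_mk] at h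
        have := Quotient.exact h
        rcases reach_endpoints hm tm (this : Reach hm tm (↑S) u.val v2.val) with
          heq | ⟨-, hmem⟩
        · exact absurd (heq ▸ u.2) v2.2
        · exact absurd hmem v2.2
      · induction c2 using Quotient.inductionOn with
        | h u =>
        simp only [hφ, Sum.elim_inl, Sum.elim_inr, Quotient.lift_mk] at h
        have := Quotient.exact h
        rcases reach_endpoints hm tm (this : Reach hm tm (↑S) v1.val u.val) with
          heq | ⟨hmem, -⟩
        · exact absurd (heq ▸ u.2) v1.2
        · exact absurd hmem v1.2
      · simp only [hφ, Sum.elim_inr] at h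
        have := Quotient.exact h
        rcases reach_endpoints hm tm (this : Reach hm tm (↑S) v1.val v2.val) with
          heq | ⟨hmem, -⟩
        · exact congrArg Sum.inr (Subtype.ext heq)
        · exact absurd hmem v1.2
    · intro c
      induction c using Quotient.inductionOn with
      | h a =>
        by_cases ha : a ∈ V
        · exact ⟨Sum.inl ⟦⟨a, ha⟩⟧, rfl⟩
        · exact ⟨Sum.inr ⟨a, ha⟩, rfl⟩
  have hcard := Nat.card_eq_of_bijective φ hbij
  rw [Nat.card_sum] at hcard
  have h1 : Nat.card {v : Fin (n+1) // v ∉ V} = (n + 1) - V.card := by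
    rw [Nat.card_eq_fintype_card, Fintype.card_subtype_compl]
    congr 1
    · simp
    · exact Fintype.card_coe V
  have h2 : Nat.card (Quotient s') = numComponentsOn hm tm S := rfl
  have h3 : kap hm tm S = Nat.card (Quotient s) := rfl
  have hVle : V.card ≤ n + 1 := by
    have := Finset.card_le_univ V
    simpa using this
  omega

lemma betti1_eq (S : Finset E) :
    betti1 hm tm S = S.card + kap hm tm S - (n + 1) := by
  have h := kap_vertexSet hm tm S
  rw [betti1]
  omega

end Aux

-- (i) for every spanning tree `T`, `h₁(Γ') ≤ |Γ'₁ \ T| ≤ h₁(Γ) = |Γ₁| - N + 1`;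
-- (ii) some spanning tree achieves `|Γ'₁ \ T| = h₁(Γ')`;
-- consequently, after substituting `t_e = ρ ξ_e` for `e ∈ Γ'₁`, the spanning-tree
-- polynomial is a polynomial in `ρ` with monomials of degree between `h₁(Γ')` and
-- `h₁(Γ)` and nonzero coefficient in degree `h₁(Γ')`.
open scoped Classical in
theorem spanning_tree_polynomial {n : ℕ} {E : Type*} [Fintype E] [DecidableEq E]
    (hm tm : E → Fin (n + 1))
    (hconn : ∀ a b : Fin (n + 1), Reach hm tm Set.univ a b)
    (hloop : ∀ e, hm e ≠ tm e)
    (S : Finset E) (ξ s : E → ℝ) (hξ : ∀ e, 0 < ξ e) (hs : ∀ e, 0 < s e) :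
    (∀ T : Finset E, IsSpanningTree hm tm T →
        betti1 hm tm S ≤ (S \ T).card ∧ (S \ T).card ≤ Fintype.card E - n) ∧
    (∃ T : Finset E, IsSpanningTree hm tm T ∧ (S \ T).card = betti1 hm tm S) ∧
    (∃ c : ℕ → ℝ, c (betti1 hm tm S) ≠ 0 ∧ ∀ ρ : ℝ,
        (∑ T ∈ Finset.univ.filter fun T : Finset E => IsSpanningTree hm tm T,
          ∏ e ∈ Tᶜ, (if e ∈ S then ρ * ξ e else s e)) =
        ∑ k ∈ Finset.Icc (betti1 hm tm S) (Fintype.card E - n), c k * ρ ^ k) := by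
  have hkuniv : kap hm tm (Finset.univ : Finset E) = 1 := by
    rw [kap_eq_one_iff]
    intro a b
    have := hconn a b
    rwa [← Finset.coe_univ] at this
  have hst : ∀ T : Finset E, IsSpanningTree hm tm T ↔ (T.card = n ∧ kap hm tm T = 1) := by
    intro T
    unfold IsSpanningTree
    rw [kap_eq_one_iff]
  -- part (i)
  have part1 : ∀ T : Finset E, IsSpanningTree hm tm T →
      betti1 hm tm S ≤ (S \ T).card ∧ (S \ T).card ≤ Fintype.card E - n := by
    intro T hT
    obtain ⟨hTc, hTk⟩ := (hst T).mp hT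
    have h1 : kap hm tm (S ∩ T) + (S ∩ T).card ≤ kap hm tm T + T.card :=
      kap_add_card_mono hm tm _ (S ∩ T) T Finset.inter_subset_right rfl
    have h2 : kap hm tm S ≤ kap hm tm (S ∩ T) := kap_mono hm tm Finset.inter_subset_left
    have h3 : (S ∩ T).card + (S \ T).card = S.card := Finset.card_inter_add_card_sdiff S T
    have hb := betti1_eq hm tm S
    constructor
    · omega
    · have hsub : S \ T ⊆ Tᶜ := fun x hx =>
        Finset.mem_compl.mpr (Finset.mem_sdiff.mp hx).2
      have := Finset.card_le_card hsub
      rwa [Finset.card_compl, hTc] at this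
  -- part (ii)
  have part2 : ∃ T : Finset E, IsSpanningTree hm tm T ∧ (S \ T).card = betti1 hm tm S := by
    obtain ⟨F, -, hFS, hFk, hFsum⟩ := greedy hm tm (S \ ∅).card ∅ S (Finset.empty_subset S)
      rfl (by rw [kap_empty]; simp)
    obtain ⟨T, hFT, -, hTk, hTsum⟩ := greedy hm tm (Finset.univ \ F).card F Finset.univ
      (Finset.subset_univ F) rfl hFsum
    rw [hkuniv] at hTk
    have hTcard : T.card = n := by omega
    refine ⟨T, (hst T).mpr ⟨hTcard, hTk⟩, ?_⟩
    have hF_sub : F ⊆ S ∩ T := Finset.subset_inter hFS hFT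
    have h4 : F.card ≤ (S ∩ T).card := Finset.card_le_card hF_sub
    have h1 : kap hm tm (S ∩ T) + (S ∩ T).card ≤ kap hm tm T + T.card :=
      kap_add_card_mono hm tm _ (S ∩ T) T Finset.inter_subset_right rfl
    have h2 : kap hm tm S ≤ kap hm tm (S ∩ T) := kap_mono hm tm Finset.inter_subset_left
    have h3 : (S ∩ T).card + (S \ T).card = S.card := Finset.card_inter_add_card_sdiff S T
    have hb := betti1_eq hm tm S
    omega
  refine ⟨part1, part2, ?_⟩
  -- part (iii)
  set TS := Finset.univ.filter (fun T : Finset E => IsSpanningTree hm tm T) with hTS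
  set w : Finset E → ℝ := fun T => (∏ e ∈ Tᶜ ∩ S, ξ e) * ∏ e ∈ Tᶜ \ S, s e with hw
  refine ⟨fun k => ∑ T ∈ TS.filter (fun T => (S \ T).card = k), w T, ?_, ?_⟩
  · -- positivity of the lowest coefficient
    obtain ⟨T0, hT0, hT0c⟩ := part2
    have hpos : 0 < ∑ T ∈ TS.filter (fun T => (S \ T).card = betti1 hm tm S), w T := by
      apply Finset.sum_pos
      · intro T hT
        exact mul_pos (Finset.prod_pos fun e _ => hξ e) (Finset.prod_pos fun e _ => hs e)
      · exact ⟨T0, Finset.mem_filter.mpr ⟨Finset.mem_filter.mpr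
          ⟨Finset.mem_univ T0, hT0⟩, hT0c⟩⟩
    exact ne_of_gt hpos
  · intro ρ
    have hprod : ∀ T : Finset E,
        (∏ e ∈ Tᶜ, (if e ∈ S then ρ * ξ e else s e)) = ρ ^ (S \ T).card * w T := by
      intro T
      rw [Finset.prod_ite, Finset.filter_mem_eq_inter, ← Finset.sdiff_eq_filter,
        Finset.prod_mul_distrib, Finset.prod_const]
      have hc : Tᶜ ∩ S = S \ T := by
        ext x
        simp [and_comm]
      simp only [hw, hc]
      ring
    rw [Finset.sum_congr rfl (fun T _ => hprod T)]
    have hmaps : ∀ T ∈ TS, (S \ T).card ∈ Finset.Icc (betti1 hm tm S) (Fintype.card E - n) := by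
      intro T hT
      have := part1 T (Finset.mem_filter.mp hT).2
      exact Finset.mem_Icc.mpr this
    rw [← Finset.sum_fiberwise_of_maps_to hmaps (fun T => ρ ^ (S \ T).card * w T)]
    apply Finset.sum_congr rfl
    intro k hk
    show (∑ T ∈ TS.filter (fun T => (S \ T).card = k), ρ ^ (S \ T).card * w T)
        = (∑ T ∈ TS.filter (fun T => (S \ T).card = k), w T) * ρ ^ k
    rw [Finset.sum_mul]
    apply Finset.sum_congr rfl
    intro T hT
    rw [(Finset.mem_filter.mp hT).2]
    ring
end

section
/- Let Γ be a connected finite directed graph without self-loops with vertex set {1,…,N}, N ≥ 2, and let Γ'₁ ⊆ Γ₁ be a nonempty edge subset. Fix positive reals ξ_e for e ∈ Γ'₁ and s_e for e ∈ Γ₁ ∖ Γ'₁, and for ρ > 0 define weights t_e(ρ) = ρ ξ_e if e ∈ Γ'₁ and t_e(ρ) = s_e otherwise. Then for every edge e ∈ Γ₁ and every 1 ≤ j ≤ N−1, the function ρ ↦ (1/t_e(ρ)) Σ_{i=1}^{N−1} ρ^e_i (M_Γ(t(ρ))^{−1})_{ij}, defined on (0, ∞), extends to a function on [0, ∞) that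 is C^∞ (smooth) on [0, ∞). -/
open Finset

set_option linter.unusedSectionVars false
set_option maxHeartbeats 1000000

open Matrix Polynomial Filter

section auxanalysis


lemma poly_contDiff (p : ℝ[X]) : ContDiff ℝ (⊤ : ℕ∞) fun x => p.eval x := by
  induction p using Polynomial.induction_on' with
  | add p q hp hq => simpa using hp.add hq
  | monomial k a =>
      simpa [Polynomial.eval_monomial] using (contDiff_const (c := a)).mul (contDiff_id.pow k)

lemma rat_ext (P Q : ℝ[X]) (hQ : ∀ ρ : ℝ, 0 < ρ → Q.eval ρ ≠ 0) (K : ℝ)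
    (hb : ∀ ρ : ℝ, 0 < ρ → ρ ≤ 1 → ρ * (P.eval ρ / Q.eval ρ) ^ 2 ≤ K) :
    ∃ g : ℝ → ℝ, ContDiffOn ℝ (⊤ : ℕ∞) g (Set.Ici 0) ∧
      ∀ ρ : ℝ, 0 < ρ → g ρ = P.eval ρ / Q.eval ρ := by
  have hQ0 : Q ≠ 0 := fun h => hQ 1 one_pos (by simp [h])
  by_cases hP0 : P = 0
  · exact ⟨0, contDiffOn_const, fun ρ hρ => by simp [hP0]⟩
  set m := Q.rootMultiplicity 0 with hmdef
  set Q₁ := Q /ₘ (X - C 0) ^ m with hQ₁def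
  have hQfac : (X - C 0) ^ m * Q₁ = Q := Q.pow_mul_divByMonic_rootMultiplicity_eq 0
  have hQ₁0 : Q₁.eval 0 ≠ 0 := eval_divByMonic_pow_rootMultiplicity_ne_zero 0 hQ0
  have hevalQ : ∀ ρ : ℝ, Q.eval ρ = ρ ^ m * Q₁.eval ρ := by
    intro ρ; conv_lhs => rw [← hQfac]
    simp
  have hQ₁ : ∀ ρ : ℝ, 0 ≤ ρ → Q₁.eval ρ ≠ 0 := by
    intro ρ hρ
    rcases eq_or_lt_of_le hρ with h | h
    · rw [← h]; exact hQ₁0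
    · intro hc
      exact hQ ρ h (by rw [hevalQ, hc, mul_zero])
  set b := P.rootMultiplicity 0 with hbdef
  set P₁ := P /ₘ (X - C 0) ^ b with hP₁def
  have hPfac : (X - C 0) ^ b * P₁ = P := P.pow_mul_divByMonic_rootMultiplicity_eq 0
  have hP₁0 : P₁.eval 0 ≠ 0 := eval_divByMonic_pow_rootMultiplicity_ne_zero 0 hP0
  have hevalP : ∀ ρ : ℝ, P.eval ρ = ρ ^ b * P₁.eval ρ := by
    intro ρ; conv_lhs => rw [← hPfac]
    simp
  -- key: m ≤ b
  have hmb : m ≤ b := by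
    by_contra hlt
    push_neg at hlt
    set k := 2 * m - (2 * b + 1) with hkdef
    have hk : 2 * m = 2 * b + 1 + k := by omega
    have hkpos : 1 ≤ k := by omega
    set h : ℝ → ℝ := fun ρ => (P₁.eval ρ) ^ 2 / (Q₁.eval ρ) ^ 2 * (ρ ^ k)⁻¹ with hhdef
    have key : ∀ ρ : ℝ, 0 < ρ → ρ * (P.eval ρ / Q.eval ρ) ^ 2 = h ρ := by
      intro ρ hρ
      have h1 : Q₁.eval ρ ≠ 0 := hQ₁ ρ hρ.le
      have h2 : (ρ : ℝ) ≠ 0 := ne_of_gt hρ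
      rw [hhdef]
      simp only [hevalP, hevalQ]
      field_simp
      rw [← pow_mul, ← pow_mul,
        show m * 2 = b * 2 + 1 + k by omega, pow_add, pow_add]
      ring
    have L1 : Tendsto (fun ρ : ℝ => (P₁.eval ρ) ^ 2 / (Q₁.eval ρ) ^ 2) (nhdsWithin 0 (Set.Ioi 0))
        (nhds ((P₁.eval 0) ^ 2 / (Q₁.eval 0) ^ 2)) := by
      apply Filter.Tendsto.mono_left _ nhdsWithin_le_nhds
      exact (ContinuousAt.div (((poly_contDiff P₁).continuous.pow 2).continuousAt)
        (((poly_contDiff Q₁).continuous.pow 2).continuousAt) (pow_ne_zero 2 hQ₁0)).tendsto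
    have Lpos : 0 < (P₁.eval 0) ^ 2 / (Q₁.eval 0) ^ 2 := by
      apply div_pos
      · exact lt_of_le_of_ne (sq_nonneg _) (Ne.symm (pow_ne_zero 2 hP₁0))
      · exact lt_of_le_of_ne (sq_nonneg _) (Ne.symm (pow_ne_zero 2 hQ₁0))
    have L2 : Tendsto (fun ρ : ℝ => (ρ ^ k)⁻¹) (nhdsWithin 0 (Set.Ioi 0)) atTop := by
      apply tendsto_inv_nhdsGT_zero.comp
      apply tendsto_nhdsWithin_of_tendsto_nhds_of_eventually_within
      · have := (continuous_pow k).tendsto (0 : ℝ)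
        simpa [zero_pow (by omega : k ≠ 0)] using this.mono_left nhdsWithin_le_nhds
      · filter_upwards [self_mem_nhdsWithin] with x hx
        exact pow_pos (Set.mem_Ioi.mp hx) k
    have Ltop : Tendsto h (nhdsWithin 0 (Set.Ioi 0)) atTop :=
      Filter.Tendsto.pos_mul_atTop Lpos L1 L2
    have hev : ∀ᶠ ρ in nhdsWithin (0:ℝ) (Set.Ioi 0), K < h ρ := Ltop.eventually (eventually_gt_atTop K)
    have hev2 : ∀ᶠ ρ in nhdsWithin (0:ℝ) (Set.Ioi 0), h ρ ≤ K := by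
      filter_upwards [Ioc_mem_nhdsGT (by norm_num : (0:ℝ) < 1)] with ρ hρ
      rw [← key ρ hρ.1]
      exact hb ρ hρ.1 hρ.2
    obtain ⟨ρ, h1, h2⟩ := (hev.and hev2).exists
    linarith
  -- construct g
  refine ⟨fun x => x ^ (b - m) * P₁.eval x / Q₁.eval x, ?_, ?_⟩
  · have hsub : Set.Ici (0:ℝ) ⊆ {x : ℝ | Q₁.eval x ≠ 0} := fun x hx => hQ₁ x hx
    apply ContDiffOn.mono _ hsub
    apply ContDiffOn.div
    · exact ((contDiff_id.pow (b - m)).mul (poly_contDiff P₁)).contDiffOn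
    · exact (poly_contDiff Q₁).contDiffOn
    · exact fun x hx => hx
  · intro ρ hρ
    have h1 : Q₁.eval ρ ≠ 0 := hQ₁ ρ hρ.le
    have h2 : (ρ : ℝ) ≠ 0 := ne_of_gt hρ
    rw [hevalP, hevalQ]
    rw [show b = (b - m) + m by omega, pow_add]
    simp only [Nat.add_sub_cancel]
    field_simp

end auxanalysis

section matrixlemmas


variable {n : ℕ} {E : Type*} [Fintype E] (hm tm : E → Fin (n + 1))

/-- the quadratic/bilinear form identity -/
lemma lap_quad (w : E → ℝ) (v v' : Fin n → ℝ) :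
    v ⬝ᵥ (lap hm tm w) *ᵥ v' =
      ∑ e, (∑ i, inc hm tm e i.castSucc * v i) * (∑ i, inc hm tm e i.castSucc * v' i) / w e := by
  simp only [dotProduct, Matrix.mulVec, lap, Matrix.of_apply, Finset.sum_mul,
    Finset.mul_sum, Finset.sum_div]
  have swap : ∀ f : Fin n → Fin n → E → ℝ,
      (∑ i, ∑ j, ∑ e, f i j e) = ∑ e, ∑ j, ∑ i, f i j e := fun f =>
    calc (∑ i, ∑ j, ∑ e, f i j e) = ∑ j, ∑ i, ∑ e, f i j e := Finset.sum_comm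
      _ = ∑ j, ∑ e, ∑ i, f i j e := Finset.sum_congr rfl fun j _ => Finset.sum_comm
      _ = ∑ e, ∑ j, ∑ i, f i j e := Finset.sum_comm
  rw [swap]
  exact Finset.sum_congr rfl fun e _ => Finset.sum_congr rfl fun j _ =>
    Finset.sum_congr rfl fun i _ => by ring


lemma single_sum (a : Fin (n + 1)) (v : Fin n → ℝ) :
    ∑ i, (if a = i.castSucc then (1:ℝ) else 0) * v i = (Fin.snoc v (0:ℝ) : Fin (n+1) → ℝ) a := by
  induction a using Fin.lastCases with
  | last =>
      rw [Fin.snoc_last]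
      refine Finset.sum_eq_zero fun i _ => ?_
      rw [if_neg (Fin.castSucc_lt_last i).ne', zero_mul]
  | cast i₀ =>
      rw [Fin.snoc_castSucc]
      rw [Finset.sum_eq_single i₀]
      · rw [if_pos rfl, one_mul]
      · intro i _ hne
        rw [if_neg (by simpa [Fin.castSucc_inj] using (Ne.symm hne)), zero_mul]
      · intro h; exact absurd (Finset.mem_univ i₀) h

lemma sum_inc_eq (e : E) (hne : hm e ≠ tm e) (v : Fin n → ℝ) :
    ∑ i, inc hm tm e i.castSucc * v i =
      (Fin.snoc v (0:ℝ) : Fin (n+1) → ℝ) (hm e) - (Fin.snoc v (0:ℝ) : Fin (n+1) → ℝ) (tm e) := by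
  rw [← single_sum (hm e) v, ← single_sum (tm e) v, ← Finset.sum_sub_distrib]
  refine Finset.sum_congr rfl fun i _ => ?_
  rw [← sub_mul]
  congr 1
  unfold inc
  by_cases h1 : hm e = i.castSucc <;> by_cases h2 : tm e = i.castSucc <;>
    simp [h1, h2] <;> first
    | rfl
    | (exact absurd (h1.trans h2.symm) hne)

lemma lap_symm (w : E → ℝ) : (lap hm tm w)ᵀ = lap hm tm w := by
  ext i j
  simp only [Matrix.transpose_apply, lap, Matrix.of_apply]
  exact Finset.sum_congr rfl fun e _ => by ring

lemma lap_qf_nonneg (w : E → ℝ) (hw : ∀ e, 0 < w e) (v : Fin n → ℝ) :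
    0 ≤ v ⬝ᵥ (lap hm tm w) *ᵥ v := by
  rw [lap_quad]
  exact Finset.sum_nonneg fun e _ => div_nonneg (mul_self_nonneg _) (hw e).le

lemma lap_vanish (hconn : ∀ a b : Fin (n + 1), Reach hm tm Set.univ a b)
    (hloop : ∀ e, hm e ≠ tm e) (w : E → ℝ) (hw : ∀ e, 0 < w e) (v : Fin n → ℝ)
    (hv : v ⬝ᵥ (lap hm tm w) *ᵥ v = 0) : v = 0 := by
  rw [lap_quad] at hv
  have hterm : ∀ e : E, (∑ i, inc hm tm e i.castSucc * v i) = 0 := by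
    intro e
    have h0 : ∀ e' ∈ Finset.univ (α := E),
        0 ≤ (∑ i, inc hm tm e' i.castSucc * v i) * (∑ i, inc hm tm e' i.castSucc * v i) / w e' :=
      fun e' _ => div_nonneg (mul_self_nonneg _) (hw e').le
    have := (Finset.sum_eq_zero_iff_of_nonneg h0).mp hv e (Finset.mem_univ e)
    have hne := (hw e).ne'
    rw [_root_.div_eq_zero_iff] at this
    exact mul_self_eq_zero.mp (this.resolve_right hne)
  have hVe : ∀ e : E, (Fin.snoc v (0:ℝ) : Fin (n+1) → ℝ) (hm e)
      = (Fin.snoc v (0:ℝ) : Fin (n+1) → ℝ) (tm e) := by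
    intro e
    have := hterm e
    rw [sum_inc_eq hm tm e (hloop e)] at this
    exact sub_eq_zero.mp this
  have hre : ∀ a b : Fin (n + 1), Reach hm tm Set.univ a b →
      (Fin.snoc v (0:ℝ) : Fin (n+1) → ℝ) a = (Fin.snoc v (0:ℝ) : Fin (n+1) → ℝ) b := by
    intro a b hab
    induction hab with
    | rel a b h => obtain ⟨e, _, he1, he2⟩ := h; rw [← he1, ← he2]; exact hVe e
    | refl a => rfl
    | symm a b _ ih => exact ih.symm
    | trans a b c _ _ ih1 ih2 => exact ih1.trans ih2
  funext i
  have := hre i.castSucc (Fin.last n) (hconn _ _)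
  simpa [Fin.snoc_castSucc, Fin.snoc_last] using this

lemma lap_det_ne_zero [DecidableEq E] (hconn : ∀ a b : Fin (n + 1), Reach hm tm Set.univ a b)
    (hloop : ∀ e, hm e ≠ tm e) (w : E → ℝ) (hw : ∀ e, 0 < w e) :
    (lap hm tm w).det ≠ 0 := by
  intro h
  obtain ⟨v, hv0, hv⟩ := (Matrix.exists_mulVec_eq_zero_iff).mpr h
  exact hv0 (lap_vanish hm tm hconn hloop w hw v (by rw [hv, dotProduct_zero]))

end matrixlemmas

section invlemmas

variable {n : ℕ} {E : Type*} [Fintype E] [DecidableEq E] (hm tm : E → Fin (n + 1))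
  (hconn : ∀ a b : Fin (n + 1), Reach hm tm Set.univ a b)
  (hloop : ∀ e, hm e ≠ tm e)

-- generic symmetric-matrix bilinear-form symmetry
lemma bilin_symm {A : Matrix (Fin n) (Fin n) ℝ} (hA : Aᵀ = A) (x y : Fin n → ℝ) :
    x ⬝ᵥ A *ᵥ y = y ⬝ᵥ A *ᵥ x := by
  rw [Matrix.dotProduct_mulVec, dotProduct_comm, ← Matrix.mulVec_transpose, hA]

variable (w : E → ℝ) (hw : ∀ e, 0 < w e)

include hconn hloop hw

lemma lap_isunit_det : IsUnit (lap hm tm w).det :=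
  isUnit_iff_ne_zero.mpr (lap_det_ne_zero hm tm hconn hloop w hw)

lemma lap_inv_transpose : (lap hm tm w)⁻¹ᵀ = (lap hm tm w)⁻¹ := by
  rw [Matrix.transpose_nonsing_inv, lap_symm]

lemma lap_mulVec_inv (x : Fin n → ℝ) :
    (lap hm tm w) *ᵥ ((lap hm tm w)⁻¹ *ᵥ x) = x := by
  rw [Matrix.mulVec_mulVec, Matrix.mul_nonsing_inv _ (lap_isunit_det hm tm hconn hloop w hw),
    Matrix.one_mulVec]

lemma lap_inv_qf_nonneg (x : Fin n → ℝ) : 0 ≤ x ⬝ᵥ (lap hm tm w)⁻¹ *ᵥ x := by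
  set z := (lap hm tm w)⁻¹ *ᵥ x with hz
  have hx : (lap hm tm w) *ᵥ z = x := lap_mulVec_inv hm tm hconn hloop w hw x
  calc (0:ℝ) ≤ z ⬝ᵥ (lap hm tm w) *ᵥ z := lap_qf_nonneg hm tm w hw z
    _ = ((lap hm tm w) *ᵥ z) ⬝ᵥ z := dotProduct_comm _ _
    _ = x ⬝ᵥ (lap hm tm w)⁻¹ *ᵥ x := by rw [hx]

lemma lap_inv_cs (x y : Fin n → ℝ) :
    (x ⬝ᵥ (lap hm tm w)⁻¹ *ᵥ y) ^ 2 ≤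
      (x ⬝ᵥ (lap hm tm w)⁻¹ *ᵥ x) * (y ⬝ᵥ (lap hm tm w)⁻¹ *ᵥ y) := by
  set A := (lap hm tm w)⁻¹ with hA
  have hAs : Aᵀ = A := lap_inv_transpose hm tm hconn hloop w hw
  have hq : ∀ t : ℝ, 0 ≤ (y ⬝ᵥ A *ᵥ y) * (t * t) + (2 * (x ⬝ᵥ A *ᵥ y)) * t + x ⬝ᵥ A *ᵥ x := by
    intro t
    have h0 : 0 ≤ (x + t • y) ⬝ᵥ A *ᵥ (x + t • y) :=
      lap_inv_qf_nonneg hm tm hconn hloop w hw _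
    have hexp : (x + t • y) ⬝ᵥ A *ᵥ (x + t • y) =
        (y ⬝ᵥ A *ᵥ y) * (t * t) + (2 * (x ⬝ᵥ A *ᵥ y)) * t + x ⬝ᵥ A *ᵥ x := by
      simp only [Matrix.mulVec_add, Matrix.mulVec_smul, add_dotProduct,
        smul_dotProduct, dotProduct_add, dotProduct_smul, smul_eq_mul,
        bilin_symm hAs y x]
      ring
    linarith [hexp ▸ h0]
  have hd := discrim_le_zero hq
  rw [discrim] at hd
  nlinarith [hd]

lemma lap_inv_inc_le (e : E) :
    (fun i => inc hm tm e i.castSucc) ⬝ᵥ (lap hm tm w)⁻¹ *ᵥ (fun i => inc hm tm e i.castSucc)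
      ≤ w e := by
  set u : Fin n → ℝ := fun i => inc hm tm e i.castSucc with hu
  set z := (lap hm tm w)⁻¹ *ᵥ u with hz
  have hMz : (lap hm tm w) *ᵥ z = u := lap_mulVec_inv hm tm hconn hloop w hw u
  set β := u ⬝ᵥ (lap hm tm w)⁻¹ *ᵥ u with hβ
  have hβ0 : 0 ≤ β := lap_inv_qf_nonneg hm tm hconn hloop w hw u
  have hzu : z ⬝ᵥ u = β := by
    rw [hβ, ← hz, dotProduct_comm]
  have hquad : z ⬝ᵥ (lap hm tm w) *ᵥ z = β := by rw [hMz, hzu]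
  have hsum : β = ∑ e', (∑ i, inc hm tm e' i.castSucc * z i) *
      (∑ i, inc hm tm e' i.castSucc * z i) / w e' := by
    rw [← hquad, lap_quad]
  have hDe : (∑ i, inc hm tm e i.castSucc * z i) = β := by
    rw [← hzu, dotProduct_comm]
    simp [dotProduct, hu]
  have hle : (β * β) / w e ≤ β := by
    have h1 := Finset.single_le_sum (f := fun e' => (∑ i, inc hm tm e' i.castSucc * z i) *
        (∑ i, inc hm tm e' i.castSucc * z i) / w e')
        (fun e' _ => div_nonneg (mul_self_nonneg _) (hw e').le) (Finset.mem_univ e)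
    rw [hDe] at h1
    exact h1.trans_eq hsum.symm
  have hwe := hw e
  have h2 : β * β ≤ β * w e := (div_le_iff₀ hwe).mp hle
  rcases eq_or_lt_of_le hβ0 with h | h
  · rw [← h]; exact hwe.le
  · exact le_of_mul_le_mul_left h2 h

end invlemmas

lemma lap_inv_diag_mono {n : ℕ} {E : Type*} [Fintype E] [DecidableEq E]
    (hm tm : E → Fin (n + 1))
    (hconn : ∀ a b : Fin (n + 1), Reach hm tm Set.univ a b)
    (hloop : ∀ e, hm e ≠ tm e) (w w' : E → ℝ)
    (hw : ∀ e, 0 < w e) (hw' : ∀ e, 0 < w' e) (hle : ∀ e, w e ≤ w' e) (y : Fin n → ℝ) :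
    y ⬝ᵥ (lap hm tm w)⁻¹ *ᵥ y ≤ y ⬝ᵥ (lap hm tm w')⁻¹ *ᵥ y := by
  set M := lap hm tm w with hM
  set M' := lap hm tm w' with hM'
  set z := M⁻¹ *ᵥ y with hzdef
  set z' := M'⁻¹ *ᵥ y with hz'def
  have hMz : M *ᵥ z = y := lap_mulVec_inv hm tm hconn hloop w hw y
  have hM'z' : M' *ᵥ z' = y := lap_mulVec_inv hm tm hconn hloop w' hw' y
  have ha : y ⬝ᵥ M⁻¹ *ᵥ y = z ⬝ᵥ y := dotProduct_comm _ _
  have hb : y ⬝ᵥ M'⁻¹ *ᵥ y = z' ⬝ᵥ y := dotProduct_comm _ _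
  have hquadz : z ⬝ᵥ M *ᵥ z = z ⬝ᵥ y := by rw [hMz]
  have hstep1 : z ⬝ᵥ M' *ᵥ z ≤ z ⬝ᵥ M *ᵥ z := by
    rw [hM, hM', lap_quad, lap_quad]
    refine Finset.sum_le_sum fun e _ => ?_
    exact div_le_div_of_nonneg_left (mul_self_nonneg _) (hw e) (hle e)
  have hexp : 0 ≤ (z - z') ⬝ᵥ M' *ᵥ (z - z') := lap_qf_nonneg hm tm w' hw' _
  have hsym : z' ⬝ᵥ M' *ᵥ z = z ⬝ᵥ M' *ᵥ z' := bilin_symm (lap_symm hm tm w') z' z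
  have h1 : z ⬝ᵥ M' *ᵥ z' = z ⬝ᵥ y := by rw [hM'z']
  have h2 : z' ⬝ᵥ M' *ᵥ z' = z' ⬝ᵥ y := by rw [hM'z']
  have hexp2 : (z - z') ⬝ᵥ M' *ᵥ (z - z') =
      z ⬝ᵥ M' *ᵥ z - 2 * (z ⬝ᵥ y) + z' ⬝ᵥ y := by
    simp only [Matrix.mulVec_sub, dotProduct_sub, sub_dotProduct]
    rw [hsym, h1, h2]
    ring
  rw [ha, hb]
  linarith [hexp2 ▸ hexp, hstep1, hquadz]

-- For weights `t_e(ρ) = ρ ξ_e` on `Γ'₁` and `t_e(ρ) = s_e` elsewhere, each function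
-- `ρ ↦ (1/t_e(ρ)) ∑_i ρ^e_i (M_Γ(t(ρ))⁻¹)_{ij}`, defined for `ρ > 0`, extends to a
-- function that is `C^∞` on `[0, ∞)`.
theorem lap_green_smooth_extension {n : ℕ} (hn : 1 ≤ n) {E : Type*}
    [Fintype E] [DecidableEq E]
    (hm tm : E → Fin (n + 1))
    (hconn : ∀ a b : Fin (n + 1), Reach hm tm Set.univ a b)
    (hloop : ∀ e, hm e ≠ tm e)
    (S : Finset E) (hS : S.Nonempty)
    (ξ s : E → ℝ) (hξ : ∀ e, 0 < ξ e) (hs : ∀ e, 0 < s e)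
    (e : E) (j : Fin n) :
    ∃ g : ℝ → ℝ, ContDiffOn ℝ (⊤ : ℕ∞) g (Set.Ici 0) ∧
      ∀ ρ : ℝ, 0 < ρ →
        g ρ = (1 / (if e ∈ S then ρ * ξ e else s e)) *
          ∑ i : Fin n, inc hm tm e i.castSucc *
            (lap hm tm fun e' => if e' ∈ S then ρ * ξ e' else s e')⁻¹ i j := by
  classical
  have hwpos : ∀ ρ : ℝ, 0 < ρ → ∀ e' : E, 0 < (if e' ∈ S then ρ * ξ e' else s e') := by
    intro ρ hρ e'
    by_cases h : e' ∈ S <;> simp [h, mul_pos hρ (hξ e'), hs e']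
  set A : Matrix (Fin n) (Fin n) ℝ := Matrix.of fun i k =>
    ∑ e', if e' ∈ S then inc hm tm e' i.castSucc * inc hm tm e' k.castSucc / ξ e' else 0 with hA
  set B : Matrix (Fin n) (Fin n) ℝ := Matrix.of fun i k =>
    ∑ e', if e' ∈ S then 0 else inc hm tm e' i.castSucc * inc hm tm e' k.castSucc / s e' with hB
  set Np : Matrix (Fin n) (Fin n) (Polynomial ℝ) := Matrix.of fun i k =>
    Polynomial.C (A i k) + Polynomial.X * Polynomial.C (B i k) with hNp
  have hmap : ∀ ρ : ℝ, 0 < ρ → Np.map (Polynomial.evalRingHom ρ) =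
      ρ • lap hm tm (fun e' => if e' ∈ S then ρ * ξ e' else s e') := by
    intro ρ hρ
    ext i k
    simp only [Matrix.map_apply, hNp, Matrix.of_apply, coe_evalRingHom, Polynomial.eval_add,
      Polynomial.eval_mul, Polynomial.eval_C, Polynomial.eval_X, Matrix.smul_apply, lap,
      smul_eq_mul, hA, hB]
    rw [Finset.mul_sum, Finset.mul_sum, ← Finset.sum_add_distrib]
    refine Finset.sum_congr rfl fun e' _ => ?_
    by_cases h : e' ∈ S
    · have h1 := (hξ e').ne'
      have h2 := hρ.ne'
      simp only [h, if_true]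
      field_simp
      ring
    · simp [h]
  set Qp : Polynomial ℝ := Np.det with hQp
  have cardn : Fintype.card (Fin n) = n := Fintype.card_fin n
  have hdet : ∀ ρ : ℝ, 0 < ρ →
      (lap hm tm (fun e' => if e' ∈ S then ρ * ξ e' else s e')).det ≠ 0 :=
    fun ρ hρ => lap_det_ne_zero hm tm hconn hloop _ (hwpos ρ hρ)
  have hQeval : ∀ ρ : ℝ, 0 < ρ → Qp.eval ρ =
      ρ ^ n * (lap hm tm (fun e' => if e' ∈ S then ρ * ξ e' else s e')).det := by
    intro ρ hρ
    calc Qp.eval ρ = (Np.map (Polynomial.evalRingHom ρ)).det :=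
          RingHom.map_det (Polynomial.evalRingHom ρ) Np
      _ = (ρ • lap hm tm (fun e' => if e' ∈ S then ρ * ξ e' else s e')).det := by rw [hmap ρ hρ]
      _ = _ := by rw [Matrix.det_smul, cardn]
  have hQne : ∀ ρ : ℝ, 0 < ρ → Qp.eval ρ ≠ 0 := fun ρ hρ => by
    rw [hQeval ρ hρ]; exact mul_ne_zero (pow_ne_zero _ hρ.ne') (hdet ρ hρ)
  have hAdj : ∀ ρ : ℝ, 0 < ρ → ∀ i : Fin n, (Np.adjugate i j).eval ρ =
      ρ ^ (n - 1) * (lap hm tm (fun e' => if e' ∈ S then ρ * ξ e' else s e')).adjugate i j := by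
    intro ρ hρ i
    have h1 : (Polynomial.evalRingHom ρ).mapMatrix Np.adjugate =
        Matrix.adjugate ((Polynomial.evalRingHom ρ).mapMatrix Np) :=
      RingHom.map_adjugate (Polynomial.evalRingHom ρ) Np
    have h2 : (Np.adjugate i j).eval ρ =
        ((Polynomial.evalRingHom ρ).mapMatrix Np.adjugate) i j := rfl
    rw [h2, h1]
    have h3 : (Polynomial.evalRingHom ρ).mapMatrix Np = Np.map (Polynomial.evalRingHom ρ) := rfl
    rw [h3, hmap ρ hρ, Matrix.adjugate_smul, Matrix.smul_apply, smul_eq_mul, cardn]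
  set Pp : Polynomial ℝ := (if e ∈ S then Polynomial.C (ξ e)⁻¹
      else Polynomial.C (s e)⁻¹ * Polynomial.X) *
      ∑ i, Polynomial.C (inc hm tm e i.castSucc) * Np.adjugate i j with hPp
  have hval : ∀ ρ : ℝ, 0 < ρ →
      Pp.eval ρ / Qp.eval ρ = (1 / (if e ∈ S then ρ * ξ e else s e)) *
        ∑ i : Fin n, inc hm tm e i.castSucc *
          (lap hm tm fun e' => if e' ∈ S then ρ * ξ e' else s e')⁻¹ i j := by
    intro ρ hρ
    set M := lap hm tm (fun e' => if e' ∈ S then ρ * ξ e' else s e') with hM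
    have hMinv : ∀ i : Fin n, M⁻¹ i j = (M.det)⁻¹ * M.adjugate i j := by
      intro i
      rw [Matrix.inv_def, Matrix.smul_apply, Ring.inverse_eq_inv, smul_eq_mul]
    have hsum : (∑ i : Fin n, inc hm tm e i.castSucc * M⁻¹ i j) =
        (M.det)⁻¹ * ∑ i, inc hm tm e i.castSucc * M.adjugate i j := by
      rw [Finset.mul_sum]
      exact Finset.sum_congr rfl fun i _ => by rw [hMinv i]; ring
    have hsum2 : ((∑ i, Polynomial.C (inc hm tm e i.castSucc) * Np.adjugate i j).eval ρ) =
        ρ ^ (n - 1) * ∑ i, inc hm tm e i.castSucc * M.adjugate i j := by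
      rw [Polynomial.eval_finset_sum, Finset.mul_sum]
      refine Finset.sum_congr rfl fun i _ => ?_
      rw [Polynomial.eval_mul, Polynomial.eval_C, hAdj ρ hρ i, ← hM]
      ring
    have hpow : ρ ^ n = ρ ^ (n - 1) * ρ := by
      rw [← pow_succ]
      congr 1
      omega
    have hDne : M.det ≠ 0 := hdet ρ hρ
    have hρne : ρ ≠ 0 := hρ.ne'
    rw [hsum, hQeval ρ hρ, ← hM, hPp]
    by_cases h : e ∈ S
    · simp only [h, if_true, Polynomial.eval_mul, Polynomial.eval_C, hsum2]
      have hξne := (hξ e).ne'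
      field_simp
      rw [hpow]
      ring
    · simp only [h, if_false, Polynomial.eval_mul, Polynomial.eval_C, Polynomial.eval_X, hsum2]
      have hsne := (hs e).ne'
      field_simp
      rw [hpow]
      ring
  -- the uniform bound
  set u : Fin n → ℝ := fun i => inc hm tm e i.castSucc with hu
  set dj : Fin n → ℝ := Pi.single j 1 with hdj
  have hsum_eq : ∀ ρ : ℝ, 0 < ρ →
      (∑ i : Fin n, inc hm tm e i.castSucc *
        (lap hm tm fun e' => if e' ∈ S then ρ * ξ e' else s e')⁻¹ i j) =
      u ⬝ᵥ (lap hm tm fun e' => if e' ∈ S then ρ * ξ e' else s e')⁻¹ *ᵥ dj := by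
    intro ρ hρ
    rw [hdj, Matrix.mulVec_single]
    simp [dotProduct, hu]
  set w1 : E → ℝ := fun e' => if e' ∈ S then 1 * ξ e' else s e' with hw1
  set C0 : ℝ := dj ⬝ᵥ (lap hm tm w1)⁻¹ *ᵥ dj with hC0def
  have hw1pos : ∀ e', 0 < w1 e' := hwpos 1 one_pos
  have hC0 : 0 ≤ C0 := lap_inv_qf_nonneg hm tm hconn hloop w1 hw1pos dj
  set K : ℝ := max (ξ e)⁻¹ (s e)⁻¹ * C0 with hK
  have hbound : ∀ ρ : ℝ, 0 < ρ → ρ ≤ 1 →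
      ρ * ((1 / (if e ∈ S then ρ * ξ e else s e)) *
        (u ⬝ᵥ (lap hm tm fun e' => if e' ∈ S then ρ * ξ e' else s e')⁻¹ *ᵥ dj)) ^ 2 ≤ K := by
    intro ρ hρ hρ1
    set wρ : E → ℝ := fun e' => if e' ∈ S then ρ * ξ e' else s e' with hwρ
    have hwp : ∀ e', 0 < wρ e' := hwpos ρ hρ
    have hcs := lap_inv_cs hm tm hconn hloop wρ hwp u dj
    have huu : u ⬝ᵥ (lap hm tm wρ)⁻¹ *ᵥ u ≤ wρ e := by
      have := lap_inv_inc_le hm tm hconn hloop wρ hwp e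
      exact this
    have hdd0 : 0 ≤ dj ⬝ᵥ (lap hm tm wρ)⁻¹ *ᵥ dj := lap_inv_qf_nonneg hm tm hconn hloop wρ hwp dj
    have hmono : dj ⬝ᵥ (lap hm tm wρ)⁻¹ *ᵥ dj ≤ C0 := by
      refine lap_inv_diag_mono hm tm hconn hloop wρ w1 hwp hw1pos (fun e' => ?_) dj
      by_cases h : e' ∈ S
      · simp only [hwρ, hw1, h, if_true]
        have := (hξ e').le
        nlinarith [hξ e']
      · simp [hwρ, hw1, h]
    have htpos : 0 < wρ e := hwp e
    set X := u ⬝ᵥ (lap hm tm wρ)⁻¹ *ᵥ dj with hX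
    have h1 : X ^ 2 ≤ wρ e * C0 := le_trans hcs (mul_le_mul huu hmono hdd0 htpos.le)
    have h3 : ρ / wρ e ≤ max (ξ e)⁻¹ (s e)⁻¹ := by
      by_cases h : e ∈ S
      · have heq : ρ / wρ e = (ξ e)⁻¹ := by
          rw [hwρ]
          simp only [h, if_true]
          rw [div_mul_eq_div_div, div_self hρ.ne', one_div]
        rw [heq]
        exact le_max_left _ _
      · have heq : wρ e = s e := by rw [hwρ]; simp [h]
        rw [heq]
        refine le_trans ?_ (le_max_right (ξ e)⁻¹ (s e)⁻¹)
        rw [← one_div]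
        exact (div_le_div_iff_of_pos_right (hs e)).mpr hρ1
    have hXt : ρ * ((1 / wρ e) * X) ^ 2 = (ρ / wρ e) * (X ^ 2 / wρ e) := by
      have h := htpos.ne'
      field_simp [pow_two]
    have h4 : X ^ 2 / wρ e ≤ C0 := by
      rw [div_le_iff₀ htpos]
      calc X ^ 2 ≤ wρ e * C0 := h1
        _ = C0 * wρ e := by ring
    have h5 : 0 ≤ X ^ 2 / wρ e := div_nonneg (sq_nonneg X) htpos.le
    have h6 : 0 ≤ max (ξ e)⁻¹ (s e)⁻¹ := le_trans (inv_nonneg.mpr (hξ e).le) (le_max_left _ _)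
    calc ρ * ((1 / wρ e) * X) ^ 2 = (ρ / wρ e) * (X ^ 2 / wρ e) := hXt
      _ ≤ max (ξ e)⁻¹ (s e)⁻¹ * C0 := mul_le_mul h3 h4 h5 h6
      _ = K := hK.symm
  -- assemble
  obtain ⟨g, hg1, hg2⟩ := rat_ext Pp Qp hQne K (fun ρ hρ hρ1 => by
    rw [hval ρ hρ, hsum_eq ρ hρ]
    exact hbound ρ hρ hρ1)
  refine ⟨g, hg1, fun ρ hρ => ?_⟩
  rw [hg2 ρ hρ, hval ρ hρ]
end

section
/- Let d ≥ 1, let Γ be a finite directed graph without self-loops with vertex set {1,…,N} and nonempty edge set Γ₁, let t = (t_e)_{e∈Γ₁} be positive reals, and let w = (w_1,…,w_N) ∈ (ℂ^d)^N. Define y_e = (1/(2 t_e)) Σ_{i=1}^N ρ^e_i conj(w_i) ∈ ℂ^d for each e ∈ Γ₁, and let L : (ℂ^d)^N × ℂ^{Γ₁} → (ℂ^d)^{Γ₁} be the ℂ-linear map L(u, s)_e = (1/(2 t_e)) Σ_{i=1}^N ρ^e_i u_i − (s_e / t_e) y_e. Then rank(L) ≤ dN + |Γ₁| − d − 1. (This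 rank bound is the linear-algebra core of the vanishing of the graph-integral integrand when a connected subgraph Γ' satisfies d|Γ'₀| < (d−1)|Γ'₁| + d + 1.) -/
open Finset

lemma sum_inc {N : ℕ} {E : Type*} (hm tm : E → Fin N) (e : E) (hne : hm e ≠ tm e) :
    ∑ i : Fin N, (inc hm tm e i : ℝ) = 0 := by
  have : ∀ i : Fin N, (inc hm tm e i : ℝ) =
      (if i = hm e then (1:ℝ) else 0) - (if i = tm e then (1:ℝ) else 0) := by
    intro i
    unfold inc
    by_cases h1 : hm e = i <;> by_cases h2 : tm e = i <;>
      simp_all [eq_comm]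
  simp [this, Finset.sum_sub_distrib]

-- The linear-algebra core of the vanishing result: the `ℂ`-linear map
-- `L(u, s)_e = (1/(2t_e)) ∑_i ρ^e_i u_i - (s_e/t_e) y_e`, with
-- `y_e = (1/(2t_e)) ∑_i ρ^e_i conj(w_i)`, has rank at most `dN + |Γ₁| - d - 1`.
theorem graph_integrand_rank_bound (d : ℕ) (hd : 1 ≤ d) {N : ℕ} (hN : 1 ≤ N)
    {E : Type*} [Fintype E] (hE : Nonempty E)
    (hm tm : E → Fin N) (hloop : ∀ e, hm e ≠ tm e)
    (t : E → ℝ) (ht : ∀ e, 0 < t e)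
    (w : Fin N → Fin d → ℂ)
    (y : E → Fin d → ℂ)
    (hy : ∀ e k, y e k =
      ((1 / (2 * t e) : ℝ) : ℂ) * ∑ i, ((inc hm tm e i : ℝ) : ℂ) * (starRingEnd ℂ) (w i k))
    (L : ((Fin N → Fin d → ℂ) × (E → ℂ)) →ₗ[ℂ] (E → Fin d → ℂ))
    (hL : ∀ (u : Fin N → Fin d → ℂ) (s : E → ℂ) (e : E) (k : Fin d),
      L (u, s) e k =
        ((1 / (2 * t e) : ℝ) : ℂ) * (∑ i, ((inc hm tm e i : ℝ) : ℂ) * u i k) -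
          (s e / (t e : ℂ)) * y e k) :
    Module.finrank ℂ (LinearMap.range L) ≤ d * N + Fintype.card E - d - 1 := by
  classical
  -- the map φ : (Fin d → ℂ) × ℂ → domain, (c, a) ↦ (i ↦ c + a • conj (w i), e ↦ a * t e)
  let φ : ((Fin d → ℂ) × ℂ) →ₗ[ℂ] ((Fin N → Fin d → ℂ) × (E → ℂ)) :=
    { toFun := fun p => (fun i k => p.1 k + p.2 * (starRingEnd ℂ) (w i k),
                         fun e => p.2 * (t e : ℂ))
      map_add' := by
        intro p q
        ext <;> simp <;> ring
      map_smul' := by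
        intro c p
        ext <;> simp <;> ring }
  have hker : ∀ p, φ p ∈ LinearMap.ker L := by
    intro p
    rw [LinearMap.mem_ker]
    funext e k
    have h0 : L (φ p) e k = 0 := by
      show L (fun i k => p.1 k + p.2 * (starRingEnd ℂ) (w i k),
              fun e => p.2 * (t e : ℂ)) e k = 0
      rw [hL]
      have hte : (t e : ℂ) ≠ 0 := by
        exact_mod_cast (ht e).ne'
      have hsum : (∑ i, ((inc hm tm e i : ℝ) : ℂ) *
          (p.1 k + p.2 * (starRingEnd ℂ) (w i k)))
          = p.2 * ∑ i, ((inc hm tm e i : ℝ) : ℂ) * (starRingEnd ℂ) (w i k) := by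
        rw [Finset.mul_sum]
        have hz : (∑ i : Fin N, ((inc hm tm e i : ℝ) : ℂ)) = 0 := by
          rw [← Complex.ofReal_sum, sum_inc hm tm e (hloop e)]
          simp
        calc (∑ i, ((inc hm tm e i : ℝ) : ℂ) *
              (p.1 k + p.2 * (starRingEnd ℂ) (w i k)))
            = ∑ i, (((inc hm tm e i : ℝ) : ℂ) * p.1 k +
              p.2 * (((inc hm tm e i : ℝ) : ℂ) * (starRingEnd ℂ) (w i k))) := by
              congr 1; ext i; ring
          _ = (∑ i, ((inc hm tm e i : ℝ) : ℂ)) * p.1 k +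
              ∑ i, p.2 * (((inc hm tm e i : ℝ) : ℂ) * (starRingEnd ℂ) (w i k)) := by
              rw [Finset.sum_add_distrib, Finset.sum_mul]
          _ = ∑ i, p.2 * (((inc hm tm e i : ℝ) : ℂ) * (starRingEnd ℂ) (w i k)) := by
              rw [hz]; ring
      rw [hsum, hy e k]
      field_simp
      ring
    simpa using h0
  have hinj : Function.Injective φ := by
    intro p q hpq
    obtain ⟨e⟩ := hE
    have h2 := congrFun (congrArg Prod.snd hpq) e
    simp only [φ, LinearMap.coe_mk, AddHom.coe_mk] at h2
    have hte : (t e : ℂ) ≠ 0 := by exact_mod_cast (ht e).ne'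
    have ha : p.2 = q.2 := by
      field_simp at h2
      tauto
    have h1 := congrArg Prod.fst hpq
    simp only [φ, LinearMap.coe_mk, AddHom.coe_mk] at h1
    have hc : p.1 = q.1 := by
      funext k
      have := congrFun (congrFun h1 ⟨0, hN⟩) k
      rw [ha] at this
      exact add_right_cancel this
    exact Prod.ext hc ha
  -- φ corestricts to an injective map into ker L
  let ψ : ((Fin d → ℂ) × ℂ) →ₗ[ℂ] (LinearMap.ker L) := φ.codRestrict _ hker
  have hψinj : Function.Injective ψ := by
    intro p q h
    apply hinj
    exact congrArg Subtype.val h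
  have hkerdim : d + 1 ≤ Module.finrank ℂ (LinearMap.ker L) := by
    have := LinearMap.finrank_le_finrank_of_injective hψinj
    simpa using this
  have hdom : Module.finrank ℂ ((Fin N → Fin d → ℂ) × (E → ℂ)) =
      N * d + Fintype.card E := by
    rw [Module.finrank_prod, Module.finrank_pi_fintype]
    simp [Module.finrank_pi, mul_comm]
  have hre := LinearMap.finrank_range_add_finrank_ker L
  rw [hdom] at hre
  have hmc : d * N = N * d := Nat.mul_comm _ _
  omega
end
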